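/- arXiv:1607.07553 — 5 statements merged into one kernel-verified Lean document; each statement's English description precedes it below -/
import Mathlib

section
/- Let G be a finite connected simple graph, let T be a spanning tree of G rooted at some vertex with depth at most D, and let H = (H_1, …, H_N) be a T-restricted shortcut with block parameter b with respect to parts P_1, …, P_N. Then for every i, any two vertices that each lie in P_i or in a block component of H_i are joined by a path of length at most b(2D+1) inside the subgraph G[P_i]+H_i. -/
open SimpleGraph

/-- The edge set of the subgraph `G[P] + H`: edges of `G` with both endpoints in `P`,
together with the shortcut edges `H`. -/
def partEdges {V : Type*} (G : SimpleGraph V) (P : Set V) (H : Set (Sym2 V)) :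
    Set (Sym2 V) :=
  {e | e ∈ G.edgeSet ∧ ∀ v ∈ e, v ∈ P} ∪ H

/-- The subgraph `G[P] + H` viewed as a simple graph on all of `V`. -/
def shortcutGraph {V : Type*} (G : SimpleGraph V) (P : Set V) (H : Set (Sym2 V)) :
    SimpleGraph V :=
  SimpleGraph.fromEdgeSet (partEdges G P H)

/-- The number of block components of `H` with respect to the part `P`:
connected components of the spanning subgraph `(V, H)` that intersect `P`. -/
noncomputable def numBlocks {V : Type*} (P : Set V) (H : Set (Sym2 V)) : ℕ :=
  {C : (SimpleGraph.fromEdgeSet H).ConnectedComponent |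
    ∃ v ∈ P, (SimpleGraph.fromEdgeSet H).connectedComponentMk v = C}.ncard

/-- Jump lemma: reachability in the shortcut forest gives a short walk in the
shortcut graph. -/
lemma jumpLemma {V : Type*} (G T : SimpleGraph V) (hT : T.IsTree)
    (r : V) (D : ℕ) (hdepth : ∀ w, T.dist r w ≤ D)
    (P : Set V) (H : Set (Sym2 V)) (hH : H ⊆ T.edgeSet)
    {u v : V} (h : (SimpleGraph.fromEdgeSet H).Reachable u v) :
    ∃ p : (shortcutGraph G P H).Walk u v, p.length ≤ 2 * D := by
  classical
  obtain ⟨W⟩ := h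
  have hWE : ∀ e ∈ W.edges, e ∈ (SimpleGraph.fromEdgeSet H).edgeSet :=
    fun e he => W.edges_subset_edgeSet he
  have hHT : (SimpleGraph.fromEdgeSet H).edgeSet ⊆ T.edgeSet := by
    rw [edgeSet_fromEdgeSet]
    exact fun e he => hH he.1
  let W' : T.Walk u v := W.transfer T (fun e he => hHT (hWE e he))
  have hpath : W'.bypass.IsPath := W'.bypass_isPath
  have hreachT : T.Reachable u v := W'.reachable
  obtain ⟨q, hq⟩ := hreachT.exists_walk_length_eq_dist
  have huniq := hT.existsUnique_path u v
  have heq : W'.bypass = q.bypass :=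
    huniq.unique hpath q.bypass_isPath
  have hlen : W'.bypass.length ≤ 2 * D := by
    rw [heq]
    calc q.bypass.length ≤ q.length := q.length_bypass_le
      _ = T.dist u v := hq
      _ ≤ T.dist u r + T.dist r v := hT.isConnected.dist_triangle
      _ ≤ D + D := by
          have h3 : T.dist u r = T.dist r u := SimpleGraph.dist_comm
          exact Nat.add_le_add (h3 ▸ hdepth u) (hdepth v)
      _ = 2 * D := by ring
  -- transfer to the shortcut graph
  have hsub : (SimpleGraph.fromEdgeSet H) ≤ shortcutGraph G P H :=
    fromEdgeSet_mono Set.subset_union_right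
  have hE : ∀ e ∈ W'.bypass.edges, e ∈ (shortcutGraph G P H).edgeSet := by
    intro e he
    have h1 : e ∈ W'.edges := W'.edges_bypass_subset he
    have h2 : e ∈ W.edges := by rwa [Walk.edges_transfer] at h1
    exact edgeSet_mono hsub (hWE e h2)
  exact ⟨W'.bypass.transfer _ hE, by rwa [Walk.length_transfer]⟩

lemma keyLemma {V : Type*} [Fintype V] (G T : SimpleGraph V) (hT : T.IsTree)
    (r : V) (D : ℕ) (hdepth : ∀ w, T.dist r w ≤ D)
    (P : Set V) (H : Set (Sym2 V)) (hH : H ⊆ T.edgeSet)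
    (v : V) :
    ∀ {a v' : V} (W : (shortcutGraph G P H).Walk a v') (x : V),
      (SimpleGraph.fromEdgeSet H).Reachable v' v →
      (∃ y ∈ W.support, (SimpleGraph.fromEdgeSet H).Reachable x y) →
      ∃ p : (shortcutGraph G P H).Walk x v,
        p.length + 1 ≤
          ((SimpleGraph.fromEdgeSet H).connectedComponentMk ''
            {y | y ∈ W.support}).ncard * (2 * D + 1) := by
  classical
  intro a v' W
  induction W with
  | nil =>
    intro x hv hx
    obtain ⟨y, hy, hr⟩ := hx
    simp only [Walk.support_nil, List.mem_singleton] at hy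
    subst hy
    obtain ⟨p, hp⟩ := jumpLemma G T hT r D hdepth P H hH (hr.trans hv)
    refine ⟨p, ?_⟩
    have hone : ∀ z : V, ((SimpleGraph.fromEdgeSet H).connectedComponentMk ''
        {w | w ∈ (Walk.nil : (shortcutGraph G P H).Walk z z).support}).ncard = 1 := by
      intro z
      have hz : {w | w ∈ (Walk.nil : (shortcutGraph G P H).Walk z z).support} = {z} := by
        ext w; simp
      rw [hz, Set.image_singleton, Set.ncard_singleton]
    rw [hone]
    omega
  | @cons a b c hadj W ih =>
    intro x hv hx
    set F := SimpleGraph.fromEdgeSet H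
    set S := F.connectedComponentMk '' {y | y ∈ (Walk.cons hadj W).support} with hS
    have hSfin : S.Finite := Set.toFinite _
    have hSpos : 1 ≤ S.ncard := by
      have hne : S.Nonempty := ⟨F.connectedComponentMk a, a, by simp, rfl⟩
      exact (Set.ncard_pos hSfin).mpr hne
    by_cases hreach : F.Reachable x v
    · obtain ⟨p, hp⟩ := jumpLemma G T hT r D hdepth P H hH hreach
      refine ⟨p, ?_⟩
      calc p.length + 1 ≤ 2 * D + 1 := by omega
        _ = 1 * (2 * D + 1) := by ring
        _ ≤ S.ncard * (2 * D + 1) := Nat.mul_le_mul_right _ hSpos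
    · have hsubS : F.connectedComponentMk '' {y | y ∈ W.support} ⊆ S := by
        apply Set.image_mono
        intro z hz
        simp only [Set.mem_setOf_eq, Walk.support_cons, List.mem_cons] at *
        exact Or.inr hz
      by_cases hb : ∃ y ∈ W.support, F.Reachable x y
      · obtain ⟨p, hp⟩ := ih x hv hb
        refine ⟨p, hp.trans ?_⟩
        exact Nat.mul_le_mul_right _ (Set.ncard_le_ncard hsubS hSfin)
      · -- x is only reachable to `a` among support vertices
        obtain ⟨y, hy, hr⟩ := hx
        simp only [Walk.support_cons, List.mem_cons] at hy
        have hxa : F.Reachable x a := by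
          rcases hy with rfl | hy
          · exact hr
          · exact absurd ⟨y, hy, hr⟩ hb
        obtain ⟨p1, hp1⟩ := jumpLemma G T hT r D hdepth P H hH hxa
        obtain ⟨p2, hp2⟩ := ih b hv ⟨b, W.start_mem_support, Reachable.refl b⟩
        refine ⟨p1.append (Walk.cons hadj p2), ?_⟩
        have hnotmem : F.connectedComponentMk a ∉
            F.connectedComponentMk '' {y | y ∈ W.support} := by
          rintro ⟨z, hz, hzc⟩
          exact hb ⟨z, hz, hxa.trans (ConnectedComponent.exact hzc.symm)⟩
        have hcard : (F.connectedComponentMk '' {y | y ∈ W.support}).ncard + 1 ≤ S.ncard := by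
          have hins : insert (F.connectedComponentMk a)
              (F.connectedComponentMk '' {y | y ∈ W.support}) ⊆ S := by
            have hmem : F.connectedComponentMk a ∈ S := ⟨a, by simp, rfl⟩
            exact Set.insert_subset hmem hsubS
          have := Set.ncard_le_ncard hins hSfin
          rwa [Set.ncard_insert_of_notMem hnotmem (Set.toFinite _)] at this
        have hlen : (p1.append (Walk.cons hadj p2)).length = p1.length + p2.length + 1 := by
          simp [Walk.length_append, Walk.length_cons]; omega
        rw [hlen]
        have h2 : p2.length + 1 ≤
            (F.connectedComponentMk '' {y | y ∈ W.support}).ncard * (2 * D + 1) := hp2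
        nlinarith [hp1, h2, hcard]

theorem stmt0 {V : Type*} [Fintype V] (G : SimpleGraph V) (hG : G.Connected)
    (T : SimpleGraph V) (hT : T.IsTree) (hTG : T ≤ G)
    (r : V) (D : ℕ) (hdepth : ∀ v, T.dist r v ≤ D)
    (N : ℕ) (P : Fin N → Set V)
    (hPdisj : ∀ i j, i ≠ j → Disjoint (P i) (P j))
    (hPne : ∀ i, (P i).Nonempty)
    (hPconn : ∀ i, (G.induce (P i)).Connected)
    (H : Fin N → Set (Sym2 V))
    (hTres : ∀ i, H i ⊆ T.edgeSet)
    (b : ℕ) (hb : ∀ i, numBlocks (P i) (H i) ≤ b)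
    (i : Fin N) (u v : V)
    (hu : u ∈ P i ∨ ∃ w ∈ P i, (SimpleGraph.fromEdgeSet (H i)).Reachable u w)
    (hv : v ∈ P i ∨ ∃ w ∈ P i, (SimpleGraph.fromEdgeSet (H i)).Reachable v w) :
    ∃ p : (shortcutGraph G (P i) (H i)).Walk u v, p.length ≤ b * (2 * D + 1) := by
  classical
  set F := SimpleGraph.fromEdgeSet (H i) with hF
  -- extract `u'`, `v'` in `P i` reachable from `u`, `v` in the forest
  obtain ⟨u', hu'P, hu'r⟩ : ∃ w ∈ P i, F.Reachable u w := by
    rcases hu with h | h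
    · exact ⟨u, h, Reachable.refl u⟩
    · exact h
  obtain ⟨v', hv'P, hv'r⟩ : ∃ w ∈ P i, F.Reachable v w := by
    rcases hv with h | h
    · exact ⟨v, h, Reachable.refl v⟩
    · exact h
  -- a walk from u' to v' inside the induced graph, mapped into the shortcut graph
  have hreach : (G.induce (P i)).Reachable ⟨u', hu'P⟩ ⟨v', hv'P⟩ :=
    (hPconn i).preconnected _ _
  obtain ⟨W0⟩ := hreach
  let f : G.induce (P i) →g shortcutGraph G (P i) (H i) :=
    ⟨Subtype.val, by
      rintro ⟨x, hx⟩ ⟨y, hy⟩ hxy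
      have hadj : G.Adj x y := hxy
      refine (fromEdgeSet_adj _).mpr ⟨Or.inl ⟨(mem_edgeSet G).mpr hadj, ?_⟩, hadj.ne⟩
      intro z hz
      rcases Sym2.mem_iff.mp hz with rfl | rfl
      · exact hx
      · exact hy⟩
  let W : (shortcutGraph G (P i) (H i)).Walk u' v' := W0.map f
  have hsupp : ∀ y ∈ W.support, y ∈ P i := by
    intro y hy
    rw [Walk.support_map, List.mem_map] at hy
    obtain ⟨z, _, rfl⟩ := hy
    exact z.2
  obtain ⟨p, hp⟩ := keyLemma G T hT r D hdepth (P i) (H i) (hTres i) v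
    W u hv'r.symm ⟨u', W.start_mem_support, hu'r⟩
  rw [← hF] at hp
  refine ⟨p, ?_⟩
  have hSle : (F.connectedComponentMk '' {y | y ∈ W.support}).ncard ≤ b := by
    refine le_trans ?_ (hb i)
    unfold numBlocks
    apply Set.ncard_le_ncard ?_ (Set.toFinite _)
    rintro C ⟨z, hz, rfl⟩
    exact ⟨z, hsupp z hz, rfl⟩
  have := Nat.mul_le_mul_right (2 * D + 1) hSle
  omega
end

section
/- Let T be a finite tree rooted at r; for each vertex v ≠ r let e_v denote the edge joining v to its parent, and let h_v be the height of v (the maximum distance in T from v to a descendant of v). Let S be a finite family of subtrees (connected subgraphs) of T such that every edge of T lies in at most c members of S. Then there exists a function t assigning a positive integer round to every pair (e, s) with s ∈ S and e an edge of s, such that: (i) for each fixed edge e, the values t(e, s) over all s ∈ S containing e are pairwise distinct; (ii) whenever e' and e are edges of the same subtree s and the upper endpoint of e' equals the lower endpoint of e, one has t(e', s) < t(e, s); and (iii) t(e_v, s) ≤ h_v + c for every v ≠ r and every s containing e_v. In particular all rounds are at most D + c, where D is the depth of T. -/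
open SimpleGraph

/-- `u` is a descendant of `v` in the tree `T` rooted at `r`:
`v` lies on the unique `T`-path from `r` to `u`. -/
def IsDescendant {V : Type*} (T : SimpleGraph V) (r v u : V) : Prop :=
  T.dist r u = T.dist r v + T.dist v u


open Classical in
noncomputable def rk {V : Type*} (T : SimpleGraph V) (r : V) (parent : V → V)
    (S : Finset T.Subgraph)
    (hp : ∀ v, v ≠ r → T.dist r (parent v) < T.dist r v) (v : V) (s : T.Subgraph) : ℕ :=
  (S.filter (fun s' => s(v, parent v) ∈ s'.edgeSet ∧
    (if h1 : v ≠ r ∧ parent v ≠ r ∧ s(parent v, parent (parent v)) ∈ s'.edgeSet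
       then rk T r parent S hp (parent v) s'
       else S.card + 1 + S.toList.idxOf s') ≤
    (if h2 : v ≠ r ∧ parent v ≠ r ∧ s(parent v, parent (parent v)) ∈ s.edgeSet
       then rk T r parent S hp (parent v) s
       else S.card + 1 + S.toList.idxOf s))).card
termination_by T.dist r v
decreasing_by
  all_goals first | exact hp v h1.1 | exact hp v h2.1

open Classical in
noncomputable def rkey {V : Type*} (T : SimpleGraph V) (r : V) (parent : V → V)
    (S : Finset T.Subgraph)
    (hp : ∀ v, v ≠ r → T.dist r (parent v) < T.dist r v) (v : V) (s : T.Subgraph) : ℕ :=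
  if v ≠ r ∧ parent v ≠ r ∧ s(parent v, parent (parent v)) ∈ s.edgeSet
    then rk T r parent S hp (parent v) s
    else S.card + 1 + S.toList.idxOf s

open Classical in
lemma rk_def {V : Type*} (T : SimpleGraph V) (r : V) (parent : V → V)
    (S : Finset T.Subgraph)
    (hp : ∀ v, v ≠ r → T.dist r (parent v) < T.dist r v) (v : V) (s : T.Subgraph) :
    rk T r parent S hp v s =
      (S.filter (fun s' => s(v, parent v) ∈ s'.edgeSet ∧
        rkey T r parent S hp v s' ≤ rkey T r parent S hp v s)).card := by
  rw [rk]
  rfl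

section RkLemmas

variable {V : Type*} {T : SimpleGraph V} {r : V} {parent : V → V} {S : Finset T.Subgraph}

open Classical in
lemma rk_le_card (hp : ∀ v, v ≠ r → T.dist r (parent v) < T.dist r v) (v : V) (s : T.Subgraph) :
    rk T r parent S hp v s ≤ S.card := by
  rw [rk_def]
  exact Finset.card_filter_le _ _

open Classical in
lemma rk_pos (hp : ∀ v, v ≠ r → T.dist r (parent v) < T.dist r v) (v : V) {s : T.Subgraph}
    (hs : s ∈ S) (he : s(v, parent v) ∈ s.edgeSet) : 1 ≤ rk T r parent S hp v s := by
  rw [rk_def]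
  exact Finset.card_pos.mpr ⟨s, Finset.mem_filter.mpr ⟨hs, he, le_refl _⟩⟩

open Classical in
lemma rk_inj (hp : ∀ v, v ≠ r → T.dist r (parent v) < T.dist r v)
    (hpos : ∀ v, v ≠ r → 0 < T.dist r v) :
    ∀ n (v : V), T.dist r v ≤ n → v ≠ r →
    ∀ s ∈ S, ∀ s' ∈ S, s(v, parent v) ∈ s.edgeSet → s(v, parent v) ∈ s'.edgeSet →
    rk T r parent S hp v s = rk T r parent S hp v s' → s = s' := by
  intro n
  induction n with
  | zero =>
    intro v hv hvr
    exact absurd hv (by have := hpos v hvr; omega)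
  | succ n ih =>
    intro v hv hvr s hs s' hs' he he' hrk
    have hkeyinj : ∀ s₁ ∈ S, ∀ s₂ ∈ S,
        rkey T r parent S hp v s₁ = rkey T r parent S hp v s₂ → s₁ = s₂ := by
      intro s₁ h₁ s₂ h₂ hk
      rw [rkey, rkey] at hk
      by_cases c₁ : v ≠ r ∧ parent v ≠ r ∧ s(parent v, parent (parent v)) ∈ s₁.edgeSet
      · rw [if_pos c₁] at hk
        by_cases c₂ : v ≠ r ∧ parent v ≠ r ∧ s(parent v, parent (parent v)) ∈ s₂.edgeSet
        · rw [if_pos c₂] at hk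
          have hd : T.dist r (parent v) ≤ n := by have := hp v hvr; omega
          exact ih (parent v) hd c₁.2.1 s₁ h₁ s₂ h₂ c₁.2.2 c₂.2.2 hk
        · rw [if_neg c₂] at hk
          have := rk_le_card (S := S) hp (parent v) s₁
          omega
      · rw [if_neg c₁] at hk
        by_cases c₂ : v ≠ r ∧ parent v ≠ r ∧ s(parent v, parent (parent v)) ∈ s₂.edgeSet
        · rw [if_pos c₂] at hk
          have := rk_le_card (S := S) hp (parent v) s₂
          omega
        · rw [if_neg c₂] at hk
          have hidx : S.toList.idxOf s₁ = S.toList.idxOf s₂ := by omega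
          exact (List.idxOf_inj (Finset.mem_toList.mpr h₁)).mp hidx
    have hmono : ∀ a b : T.Subgraph, b ∈ S → s(v, parent v) ∈ b.edgeSet →
        rkey T r parent S hp v a < rkey T r parent S hp v b →
        rk T r parent S hp v a < rk T r parent S hp v b := by
      intro a b hb heb hab
      rw [rk_def, rk_def]
      apply Finset.card_lt_card
      have hsub : S.filter (fun s' => s(v, parent v) ∈ s'.edgeSet ∧
            rkey T r parent S hp v s' ≤ rkey T r parent S hp v a) ⊆
          S.filter (fun s' => s(v, parent v) ∈ s'.edgeSet ∧
            rkey T r parent S hp v s' ≤ rkey T r parent S hp v b) := by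
        intro x hx
        rw [Finset.mem_filter] at hx ⊢
        exact ⟨hx.1, hx.2.1, le_trans hx.2.2 (le_of_lt hab)⟩
      rw [Finset.ssubset_iff_of_subset hsub]
      refine ⟨b, Finset.mem_filter.mpr ⟨hb, heb, le_refl _⟩, fun hmem => ?_⟩
      have := (Finset.mem_filter.mp hmem).2.2
      omega
    rcases lt_trichotomy (rkey T r parent S hp v s) (rkey T r parent S hp v s') with hlt | heq | hlt
    · exact absurd hrk (Nat.ne_of_lt (hmono s s' hs' he' hlt))
    · exact hkeyinj s hs s' hs' heq
    · exact absurd hrk.symm (Nat.ne_of_lt (hmono s' s hs he hlt))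

open Classical in
lemma rk_mono (hp : ∀ v, v ≠ r → T.dist r (parent v) < T.dist r v)
    (hpos : ∀ v, v ≠ r → 0 < T.dist r v) (w : V) (hw : w ≠ r) (hpw : parent w ≠ r)
    {s : T.Subgraph} (hs : s ∈ S) (hev : s(parent w, parent (parent w)) ∈ s.edgeSet) :
    rk T r parent S hp w s ≤ rk T r parent S hp (parent w) s := by
  have hkey : rkey T r parent S hp w s = rk T r parent S hp (parent w) s := by
    rw [rkey, if_pos ⟨hw, hpw, hev⟩]
  have hcard := rk_le_card (S := S) hp (parent w) s
  have hA : ∀ x ∈ S.filter (fun s' => s(w, parent w) ∈ s'.edgeSet ∧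
      rkey T r parent S hp w s' ≤ rkey T r parent S hp w s),
      s(parent w, parent (parent w)) ∈ x.edgeSet ∧
        rkey T r parent S hp w x = rk T r parent S hp (parent w) x := by
    intro x hx
    rw [Finset.mem_filter] at hx
    obtain ⟨hxS, hxe, hxk⟩ := hx
    rw [hkey] at hxk
    by_cases cx : w ≠ r ∧ parent w ≠ r ∧ s(parent w, parent (parent w)) ∈ x.edgeSet
    · rw [rkey, if_pos cx] at hxk ⊢
      exact ⟨cx.2.2, rfl⟩
    · rw [rkey, if_neg cx] at hxk
      omega
  calc rk T r parent S hp w s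
      = (S.filter (fun s' => s(w, parent w) ∈ s'.edgeSet ∧
          rkey T r parent S hp w s' ≤ rkey T r parent S hp w s)).card := rk_def _ _ _ _ _ _ _
    _ ≤ (Finset.Icc 1 (rk T r parent S hp (parent w) s)).card := by
        apply Finset.card_le_card_of_injOn (fun x => rk T r parent S hp (parent w) x)
        · intro x hx
          obtain ⟨hxev, hxkey⟩ := hA x hx
          obtain ⟨hxS, hxe, hxk⟩ := Finset.mem_filter.mp hx
          rw [hkey, hxkey] at hxk
          rw [Finset.mem_coe, Finset.mem_Icc]
          exact ⟨rk_pos hp (parent w) hxS hxev, hxk⟩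
        · intro x hx y hy hxy
          obtain ⟨hxev, -⟩ := hA x hx
          obtain ⟨hyev, -⟩ := hA y hy
          exact rk_inj hp hpos (T.dist r (parent w)) (parent w) (le_refl _) hpw
            x (Finset.mem_filter.mp hx).1 y (Finset.mem_filter.mp hy).1 hxev hyev hxy
    _ = rk T r parent S hp (parent w) s := by
        rw [Nat.card_Icc]
        have := rk_pos hp (parent w) hs hev
        omega

open Classical in
lemma rk_le_c (hp : ∀ v, v ≠ r → T.dist r (parent v) < T.dist r v) {c : ℕ} (v : V)
    (s : T.Subgraph)
    (hc : {s' | s' ∈ S ∧ s(v, parent v) ∈ s'.edgeSet}.ncard ≤ c) :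
    rk T r parent S hp v s ≤ c := by
  rw [rk_def]
  have h2 : {s' | s' ∈ S ∧ s(v, parent v) ∈ s'.edgeSet} =
      ↑(S.filter (fun s' => s(v, parent v) ∈ s'.edgeSet)) := by
    ext x; simp
  rw [h2, Set.ncard_coe_finset] at hc
  refine le_trans (Finset.card_le_card fun x hx => ?_) hc
  rw [Finset.mem_filter] at hx ⊢
  exact ⟨hx.1, hx.2.1⟩

end RkLemmas
theorem stmt3 {V : Type*} [Fintype V] (T : SimpleGraph V) (hT : T.IsTree)
    (r : V) (parent : V → V)
    (hparent : ∀ v, v ≠ r → T.Adj v (parent v) ∧ T.dist r (parent v) + 1 = T.dist r v)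
    -- `h v` is the height of `v`: the maximum distance from `v` to a descendant of `v`
    (h : V → ℕ)
    (hheight : ∀ v, IsGreatest {d | ∃ u, IsDescendant T r v u ∧ d = T.dist v u} (h v))
    -- a finite family of subtrees of `T`
    (S : Finset T.Subgraph) (hSconn : ∀ s ∈ S, SimpleGraph.Subgraph.Connected s)
    -- every edge of `T` lies in at most `c` members of the family
    (c : ℕ)
    (hcong : ∀ e ∈ T.edgeSet, {s | s ∈ S ∧ e ∈ SimpleGraph.Subgraph.edgeSet s}.ncard ≤ c)
    (D : ℕ) (hdepth : ∀ v, T.dist r v ≤ D) :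
    ∃ t : Sym2 V → T.Subgraph → ℕ,
      -- rounds are positive integers
      (∀ e, ∀ s ∈ S, e ∈ SimpleGraph.Subgraph.edgeSet s → 1 ≤ t e s) ∧
      -- (i) on each fixed edge, the rounds of the subtrees containing it are pairwise distinct
      (∀ e, ∀ s ∈ S, ∀ s' ∈ S, e ∈ SimpleGraph.Subgraph.edgeSet s →
          e ∈ SimpleGraph.Subgraph.edgeSet s' → s ≠ s' → t e s ≠ t e s') ∧
      -- (ii) rounds strictly increase along each subtree towards the root:
      -- if `w` is a child of `v` then the edge below is scheduled strictly earlier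
      (∀ s ∈ S, ∀ v w : V, v ≠ r → w ≠ r → parent w = v →
          s(w, parent w) ∈ SimpleGraph.Subgraph.edgeSet s →
          s(v, parent v) ∈ SimpleGraph.Subgraph.edgeSet s →
          t s(w, parent w) s < t s(v, parent v) s) ∧
      -- (iii) the edge from `v` to its parent is scheduled by round `h v + c`
      (∀ s ∈ S, ∀ v : V, v ≠ r → s(v, parent v) ∈ SimpleGraph.Subgraph.edgeSet s →
          t s(v, parent v) s ≤ h v + c) ∧
      -- in particular, all rounds are at most `D + c`
      (∀ s ∈ S, ∀ v : V, v ≠ r → s(v, parent v) ∈ SimpleGraph.Subgraph.edgeSet s →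
          t s(v, parent v) s ≤ D + c) := by
    classical
  have hconn : T.Connected := hT.isConnected
  have hpos : ∀ v, v ≠ r → 0 < T.dist r v := fun v hv =>
    hconn.pos_dist_of_ne (fun hrv => hv hrv.symm)
  have hp : ∀ v, v ≠ r → T.dist r (parent v) < T.dist r v := fun v hv => by
    have := (hparent v hv).2; omega
  -- uniqueness of the representation of an edge as (v, parent v)
  have hL2 : ∀ v w : V, v ≠ r → w ≠ r → s(v, parent v) = s(w, parent w) → v = w := by
    intro v w hv hw hvw
    rw [Sym2.eq_iff] at hvw
    rcases hvw with ⟨h1, -⟩ | ⟨h1, h2⟩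
    · exact h1
    · exfalso
      have e1 := (hparent v hv).2
      have e2 := (hparent w hw).2
      rw [h2] at e1
      rw [← h1] at e2
      omega
  -- vertices on shortest walks to the root
  have hnotmem : ∀ (a b : V), T.dist a r > T.dist b r → ∀ (p : T.Walk b r),
      p.length = T.dist b r → a ∉ p.support := by
    intro a b hd p hpl hmem
    have h1 : T.dist a r ≤ (p.dropUntil a hmem).length := dist_le _
    have h2 : (p.dropUntil a hmem).length ≤ p.length := SimpleGraph.Walk.length_dropUntil_le p hmem
    omega
  -- every edge of T is of the form (v, parent v)
  have hparent_unique : ∀ a b : V, T.Adj a b → T.dist r b + 1 = T.dist r a →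
      a ≠ r ∧ parent a = b := by
    intro a b hab hd
    have har : a ≠ r := by
      intro hh
      rw [hh] at hd
      have : T.dist r r = 0 := SimpleGraph.dist_self
      omega
    refine ⟨har, ?_⟩
    obtain ⟨hadjp, hdp⟩ := hparent a har
    obtain ⟨p, hpl⟩ := hconn.exists_walk_length_eq_dist b r
    have hpp := p.isPath_of_length_eq_dist hpl
    have hanp : a ∉ p.support := by
      apply hnotmem a b _ p hpl
      have e1 : T.dist a r = T.dist r a := SimpleGraph.dist_comm
      have e2 : T.dist b r = T.dist r b := SimpleGraph.dist_comm
      omega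
    have hp1 : (SimpleGraph.Walk.cons hab p).IsPath := hpp.cons hanp
    obtain ⟨q, hql⟩ := hconn.exists_walk_length_eq_dist (parent a) r
    have hqp := q.isPath_of_length_eq_dist hql
    have hanq : a ∉ q.support := by
      apply hnotmem a (parent a) _ q hql
      have e1 : T.dist a r = T.dist r a := SimpleGraph.dist_comm
      have e2 : T.dist (parent a) r = T.dist r (parent a) := SimpleGraph.dist_comm
      omega
    have hp2 : (SimpleGraph.Walk.cons hadjp q).IsPath := hqp.cons hanq
    have heq := (hT.existsUnique_path a r).unique hp1 hp2
    have := congrArg (fun w => w.getVert 1) heq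
    simpa [SimpleGraph.Walk.getVert_cons_succ] using this.symm
  have hdiff : ∀ a b : V, T.Adj a b →
      T.dist r b + 1 = T.dist r a ∨ T.dist r a + 1 = T.dist r b := by
    intro a b hab
    have hba : T.dist b a ≤ 1 := by
      have := SimpleGraph.dist_le (SimpleGraph.Walk.cons hab.symm SimpleGraph.Walk.nil)
      simpa using this
    have hab1 : T.dist a b ≤ 1 := by rw [SimpleGraph.dist_comm]; exact hba
    have h1 : T.dist r a ≤ T.dist r b + 1 := by
      have := hconn.dist_triangle (u := r) (v := b) (w := a)
      omega
    have h2 : T.dist r b ≤ T.dist r a + 1 := by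
      have := hconn.dist_triangle (u := r) (v := a) (w := b)
      omega
    have hne : T.dist r a ≠ T.dist r b := by
      intro heqd
      by_cases harr : a = r
      · rw [harr] at hab heqd
        have hz : T.dist r r = 0 := SimpleGraph.dist_self
        have : T.dist r b = 0 := by omega
        have : r = b := (hconn.dist_eq_zero_iff).mp this
        exact hab.ne this
      · obtain ⟨p, hpl⟩ := hconn.exists_walk_length_eq_dist b r
        have hpp := p.isPath_of_length_eq_dist hpl
        have hanp : a ∉ p.support := by
          intro hmem
          have h1' : T.dist a r ≤ (p.dropUntil a hmem).length := SimpleGraph.dist_le _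
          have h2' : (p.takeUntil a hmem).length + (p.dropUntil a hmem).length = p.length := by
            rw [← SimpleGraph.Walk.length_append, SimpleGraph.Walk.take_spec]
          have h3' : (p.takeUntil a hmem).length ≠ 0 := by
            intro h0
            have := SimpleGraph.Walk.eq_of_length_eq_zero h0
            exact hab.ne this.symm
          have h4' : T.dist a r = T.dist r a := SimpleGraph.dist_comm
          have h5' : T.dist b r = T.dist r b := SimpleGraph.dist_comm
          omega
        have hp1 : (SimpleGraph.Walk.cons hab p).IsPath := hpp.cons hanp
        obtain ⟨q, hql⟩ := hconn.exists_walk_length_eq_dist a r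
        have hqp := q.isPath_of_length_eq_dist hql
        have heqw := (hT.existsUnique_path a r).unique hp1 hqp
        have hlen := congrArg SimpleGraph.Walk.length heqw
        rw [SimpleGraph.Walk.length_cons] at hlen
        have h4' : T.dist a r = T.dist r a := SimpleGraph.dist_comm
        have h5' : T.dist b r = T.dist r b := SimpleGraph.dist_comm
        omega
    omega
  have hL1 : ∀ e ∈ T.edgeSet, ∃ v, v ≠ r ∧ e = s(v, parent v) := by
    intro e he
    induction e with
    | h a b =>
      rw [SimpleGraph.mem_edgeSet] at he
      rcases hdiff a b he with hd | hd
      · obtain ⟨har, hpa⟩ := hparent_unique a b he hd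
        exact ⟨a, har, by rw [hpa]⟩
      · obtain ⟨hbr, hpb⟩ := hparent_unique b a he.symm hd
        refine ⟨b, hbr, ?_⟩
        rw [hpb, Sym2.eq_swap]
  -- heights
  have hchild : ∀ v w : V, w ≠ r → parent w = v → h w < h v := by
    intro v w hw hpw
    obtain ⟨⟨u, hu, hdu⟩, -⟩ := hheight w
    obtain ⟨-, hub⟩ := hheight v
    have hdw := (hparent w hw).2
    have hadj := (hparent w hw).1
    rw [hpw] at hdw hadj
    have htri : T.dist r u ≤ T.dist r v + T.dist v u := hconn.dist_triangle
    have htri2 : T.dist v u ≤ T.dist v w + T.dist w u := hconn.dist_triangle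
    have hvw : T.dist v w ≤ 1 := by
      have := SimpleGraph.dist_le (SimpleGraph.Walk.cons hadj.symm SimpleGraph.Walk.nil)
      simpa using this
    unfold IsDescendant at hu
    have hvu : T.dist v u = T.dist w u + 1 := by omega
    have hdesc : IsDescendant T r v u := by unfold IsDescendant; omega
    have hle : h w + 1 ≤ h v := hub ⟨u, hdesc, by omega⟩
    omega
  have hhD : ∀ v, h v ≤ D := by
    intro v
    obtain ⟨⟨u, hu, hdu⟩, -⟩ := hheight v
    unfold IsDescendant at hu
    have := hdepth u
    omega
  have hC : ∀ v, v ≠ r → ∀ s : T.Subgraph, rk T r parent S hp v s ≤ c := by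
    intro v hv s
    have he : s(v, parent v) ∈ T.edgeSet := (hparent v hv).1
    exact rk_le_c hp v s (hcong _ he)
  -- the schedule
  obtain ⟨t, ht⟩ : ∃ t : Sym2 V → T.Subgraph → ℕ,
      ∀ v, v ≠ r → ∀ s, t s(v, parent v) s = h v + rk T r parent S hp v s := by
    refine ⟨fun e s => if he : ∃ v, v ≠ r ∧ e = s(v, parent v)
      then h he.choose + rk T r parent S hp he.choose s else 1, ?_⟩
    intro v hv s
    have hex : ∃ w, w ≠ r ∧ s(v, parent v) = s(w, parent w) := ⟨v, hv, rfl⟩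
    simp only [dif_pos hex]
    obtain ⟨hcr, hce⟩ := hex.choose_spec
    have hvc : v = hex.choose := hL2 v hex.choose hv hcr hce
    rw [← hvc]
  refine ⟨t, ?_, ?_, ?_, ?_, ?_⟩
  · intro e s hs hes
    obtain ⟨v, hv, rfl⟩ := hL1 e (s.edgeSet_subset hes)
    rw [ht v hv]
    have := rk_pos hp v hs hes
    omega
  · intro e s hs s' hs' hes hes' hne
    obtain ⟨v, hv, rfl⟩ := hL1 e (s.edgeSet_subset hes)
    rw [ht v hv, ht v hv]
    intro heq
    exact hne (rk_inj hp hpos (T.dist r v) v (le_refl _) hv s hs s' hs' hes hes' (by omega))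
  · intro s hs v w hv hw hpw hew hev
    subst hpw
    rw [ht w hw, ht (parent w) hv]
    have h1 : h w < h (parent w) := hchild (parent w) w hw rfl
    have h2 := rk_mono hp hpos w hw hv hs hev
    omega
  · intro s hs v hv he
    rw [ht v hv]
    have := hC v hv s
    omega
  · intro s hs v hv he
    rw [ht v hv]
    have h1 := hC v hv s
    have h2 := hhD v
    omega
end

section
/- Let T be a finite tree rooted at r; for v ≠ r let e_v be the edge to its parent and h_v the height of v. Let S be a finite family of subtrees of T, each with an assigned distinct identifier, and order S by: s ≺ s' if the root of s (its vertex closest to r) has strictly smaller depth than the root of s', or the depths are equal and the identifier of s is smaller. Then there exists a scheduling function t as in the convergecast-schedule setting (rounds pairwise distinct on each edge, and strictly increasing along each subtree towards its root) which additionally satisfies: for every v ≠ r and every s ∈ S containing e_v, t(e_v, s) ≤ h_v + i, where i is the rank of s in the ≺-ordering of the subtrees of S that contain e_v. -/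
open SimpleGraph

namespace Stmt4Aux

variable {V : Type*} {T : SimpleGraph V}

lemma dist_split {y z c : V} (p : T.Walk y z) (hp : p.length = T.dist y z)
    (hc : c ∈ p.support) : T.dist y c + T.dist c z ≤ T.dist y z := by
  classical
  calc T.dist y c + T.dist c z ≤ (p.takeUntil c hc).length + (p.dropUntil c hc).length :=
        Nat.add_le_add (dist_le _) (dist_le _)
    _ = p.length := by rw [← Walk.length_append, p.take_spec hc]
    _ = T.dist y z := hp

lemma up_unique (hT : T.IsTree) (r : V) {x y z : V}
    (hxy : T.Adj x y) (hy : T.dist r y + 1 = T.dist r x)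
    (hxz : T.Adj x z) (hz : T.dist r z + 1 = T.dist r x) : y = z := by
  obtain ⟨p, hpl⟩ := (hT.isConnected y r).exists_walk_length_eq_dist
  obtain ⟨q, hql⟩ := (hT.isConnected z r).exists_walk_length_eq_dist
  have hp := p.isPath_of_length_eq_dist hpl
  have hq := q.isPath_of_length_eq_dist hql
  have hxp : x ∉ p.support := by
    intro hx
    have h1 := dist_split p hpl hx
    have e1 : T.dist y r = T.dist r y := dist_comm
    have e2 : T.dist x r = T.dist r x := dist_comm
    omega
  have hxq : x ∉ q.support := by
    intro hx
    have h1 := dist_split q hql hx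
    have e1 : T.dist z r = T.dist r z := dist_comm
    have e2 : T.dist x r = T.dist r x := dist_comm
    omega
  have hP1 : (Walk.cons hxy p).IsPath := hp.cons hxp
  have hP2 : (Walk.cons hxz q).IsPath := hq.cons hxq
  have heq : (⟨Walk.cons hxy p, hP1⟩ : T.Path x r) = ⟨Walk.cons hxz q, hP2⟩ :=
    hT.IsAcyclic.path_unique _ _
  have heqw : Walk.cons hxy p = Walk.cons hxz q := congrArg Subtype.val heq
  have : (Walk.cons hxy p).getVert 1 = (Walk.cons hxz q).getVert 1 := by rw [heqw]
  simpa using this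

lemma adj_dist (hT : T.IsTree) (r : V) {x y : V} (hxy : T.Adj x y) :
    T.dist r y + 1 = T.dist r x ∨ T.dist r x + 1 = T.dist r y := by
  have key : ∀ x y : V, T.Adj x y → T.dist r y ≤ T.dist r x → T.dist r y + 1 = T.dist r x := by
    intro x y hxy hle
    have hyx : T.dist y x = 1 := dist_eq_one_iff_adj.mpr hxy.symm
    have h1 : T.dist r x ≤ T.dist r y + 1 := by
      have := hT.isConnected.dist_triangle (u := r) (v := y) (w := x)
      omega
    by_contra hne
    have heq : T.dist r x = T.dist r y := by omega
    obtain ⟨p, hpl⟩ := (hT.isConnected y r).exists_walk_length_eq_dist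
    have hp := p.isPath_of_length_eq_dist hpl
    by_cases hx : x ∈ p.support
    · have h2 := dist_split p hpl hx
      have e1 : T.dist y r = T.dist r y := dist_comm
      have e2 : T.dist x r = T.dist r x := dist_comm
      omega
    · have hP1 : (Walk.cons hxy p).IsPath := hp.cons hx
      obtain ⟨q, hql⟩ := (hT.isConnected x r).exists_walk_length_eq_dist
      have hq := q.isPath_of_length_eq_dist hql
      have heq2 : (⟨Walk.cons hxy p, hP1⟩ : T.Path x r) = ⟨q, hq⟩ :=
        hT.IsAcyclic.path_unique _ _
      have heqw : Walk.cons hxy p = q := congrArg Subtype.val heq2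
      have hlen : (Walk.cons hxy p).length = q.length := by rw [heqw]
      rw [Walk.length_cons, hpl, hql] at hlen
      have e1 : T.dist y r = T.dist r y := dist_comm
      have e2 : T.dist x r = T.dist r x := dist_comm
      omega
  rcases le_total (T.dist r y) (T.dist r x) with hle | hle
  · exact Or.inl (key x y hxy hle)
  · exact Or.inr (key y x hxy.symm hle)

lemma step (hT : T.IsTree) {r : V} {parent : V → V}
    (hparent : ∀ v, v ≠ r → T.Adj v (parent v) ∧ T.dist r (parent v) + 1 = T.dist r v)
    {v : V} (hv : v ≠ r) {a c : V} (hac : T.Adj a c)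
    (hne : s(a, c) ≠ s(v, parent v))
    (ha : T.dist r a = T.dist r v + T.dist v a) :
    T.dist r c = T.dist r v + T.dist v c := by
  have hac1 : T.dist a c = 1 := dist_eq_one_iff_adj.mpr hac
  have t1 : T.dist r c ≤ T.dist r v + T.dist v c := hT.isConnected.dist_triangle
  rcases adj_dist hT r hac with hdown | hup
  · -- c is the up-neighbor (parent) of a
    have har : a ≠ r := by
      intro h
      subst h
      rw [dist_self] at hdown
      omega
    have hcpar : c = parent a :=
      up_unique hT r hac hdown (hparent a har).1 (hparent a har).2
    by_cases hav : a = v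
    · exact absurd (by rw [hav, hcpar, hav]) hne
    · have hvapos : 0 < T.dist v a :=
        hT.isConnected.pos_dist_of_ne (Ne.symm hav)
      obtain ⟨q, hql⟩ := (hT.isConnected a v).exists_walk_length_eq_dist
      have hav2 : T.dist v a = T.dist a v := dist_comm
      match q, hql with
      | Walk.nil, hql => simp at hql; omega
      | Walk.cons (v := z) hz q', hql =>
        rw [Walk.length_cons] at hql
        have hq'l : T.dist z v ≤ q'.length := dist_le q'
        have haz : T.dist a z = 1 := dist_eq_one_iff_adj.mpr hz
        have htz : T.dist a v ≤ T.dist a z + T.dist z v := hT.isConnected.dist_triangle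
        have hzv : T.dist z v + 1 = T.dist a v := by omega
        have htrz : T.dist r z ≤ T.dist r v + T.dist v z := hT.isConnected.dist_triangle
        have htra : T.dist r a ≤ T.dist r z + T.dist z a := hT.isConnected.dist_triangle
        have haz2 : T.dist z a = T.dist a z := dist_comm
        have hvz : T.dist v z = T.dist z v := dist_comm
        have hva : T.dist v a = T.dist a v := dist_comm
        have hzup : T.dist r z + 1 = T.dist r a := by omega
        have hzc : z = c := up_unique hT r hz hzup hac hdown
        rw [← hzc, hvz]
        omega
  · -- c is deeper than a
    have t2 : T.dist v c ≤ T.dist v a + T.dist a c := hT.isConnected.dist_triangle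
    omega

lemma descend (hT : T.IsTree) {r : V} {parent : V → V}
    (hparent : ∀ v, v ≠ r → T.Adj v (parent v) ∧ T.dist r (parent v) + 1 = T.dist r v)
    {s' : T.Subgraph} (hc : s'.Connected) {v : V} (hv : v ≠ r)
    (hvs : v ∈ s'.verts) (he : s(v, parent v) ∉ s'.edgeSet) :
    ∀ u ∈ s'.verts, T.dist r u = T.dist r v + T.dist v u := by
  have main : ∀ {a b : s'.verts} (_ : s'.coe.Walk a b),
      T.dist r ↑a = T.dist r v + T.dist v ↑a → T.dist r ↑b = T.dist r v + T.dist v ↑b := by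
    intro a b p
    induction p with
    | nil => exact id
    | @cons a x b hadj p ih =>
      intro h1
      apply ih
      have hA : s'.Adj a.1 x.1 := hadj
      exact step hT hparent hv hA.adj_sub
        (fun hEq => he (hEq ▸ (Subgraph.mem_edgeSet.mpr hA))) h1
  intro u hu
  obtain ⟨p⟩ := hc.coe.preconnected ⟨v, hvs⟩ ⟨u, hu⟩
  exact main p (by simp)

end Stmt4Aux

open Stmt4Aux in
theorem stmt4 {V : Type*} [Fintype V] (T : SimpleGraph V) (hT : T.IsTree)
    (r : V) (parent : V → V)
    (hparent : ∀ v, v ≠ r → T.Adj v (parent v) ∧ T.dist r (parent v) + 1 = T.dist r v)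
    -- `h v` is the height of `v`: the maximum distance from `v` to a descendant of `v`
    (h : V → ℕ)
    (hheight : ∀ v, IsGreatest
      {d | ∃ u, T.dist r u = T.dist r v + T.dist v u ∧ d = T.dist v u} (h v))
    -- a finite family of subtrees of `T`
    (S : Finset T.Subgraph) (hSconn : ∀ s ∈ S, SimpleGraph.Subgraph.Connected s)
    -- distinct identifiers
    (ident : T.Subgraph → ℕ) (hident : Set.InjOn ident ↑S)
    -- `rt s` is the root of the subtree `s`: its unique vertex of minimum depth
    (rt : T.Subgraph → V)
    (hrt : ∀ s ∈ S, rt s ∈ SimpleGraph.Subgraph.verts s ∧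
      ∀ u ∈ SimpleGraph.Subgraph.verts s, T.dist r (rt s) ≤ T.dist r u) :
    -- the priority order on subtrees: smaller root depth first, ties broken by identifier
    ∀ prec : T.Subgraph → T.Subgraph → Prop,
      (∀ s s', (prec s s' ↔ T.dist r (rt s) < T.dist r (rt s') ∨
          (T.dist r (rt s) = T.dist r (rt s') ∧ ident s < ident s'))) →
    ∃ t : Sym2 V → T.Subgraph → ℕ,
      -- rounds are positive integers
      (∀ e, ∀ s ∈ S, e ∈ SimpleGraph.Subgraph.edgeSet s → 1 ≤ t e s) ∧
      -- (i) on each fixed edge, the rounds of subtrees containing it are pairwise distinct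
      (∀ e, ∀ s ∈ S, ∀ s' ∈ S, e ∈ SimpleGraph.Subgraph.edgeSet s →
          e ∈ SimpleGraph.Subgraph.edgeSet s' → s ≠ s' → t e s ≠ t e s') ∧
      -- (ii) rounds strictly increase along each subtree towards its root
      (∀ s ∈ S, ∀ v w : V, v ≠ r → w ≠ r → parent w = v →
          s(w, parent w) ∈ SimpleGraph.Subgraph.edgeSet s →
          s(v, parent v) ∈ SimpleGraph.Subgraph.edgeSet s →
          t s(w, parent w) s < t s(v, parent v) s) ∧
      -- (iii) the edge from `v` to its parent is scheduled by round `h v + i`,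
      -- where `i` is the rank of `s` in the `≺`-ordering of the subtrees containing it
      (∀ s ∈ S, ∀ v : V, v ≠ r → s(v, parent v) ∈ SimpleGraph.Subgraph.edgeSet s →
          t s(v, parent v) s ≤ h v +
            {s' | s' ∈ S ∧ s(v, parent v) ∈ SimpleGraph.Subgraph.edgeSet s' ∧
              (prec s' s ∨ s' = s)}.ncard) := by
  intro prec hprec
  classical
  -- basic properties of the priority order
  have ptrans : ∀ {a b c : T.Subgraph}, prec a b → prec b c → prec a c := by
    intro a b c hab hbc
    rw [hprec] at hab hbc ⊢
    omega
  have pasymm : ∀ {a b : T.Subgraph}, prec a b → ¬ prec b a := by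
    intro a b hab hba
    rw [hprec] at hab hba
    omega
  have ptot : ∀ {a b : T.Subgraph}, a ∈ S → b ∈ S → a ≠ b → prec a b ∨ prec b a := by
    intro a b ha hb hne
    have hi : ident a ≠ ident b := hident.ne (by simpa using ha) (by simpa using hb) hne
    rw [hprec, hprec]
    omega
  -- finiteness of the rank sets
  have hEfin : ∀ (e : Sym2 V) (s : T.Subgraph),
      ({s' | s' ∈ S ∧ e ∈ SimpleGraph.Subgraph.edgeSet s' ∧ (prec s' s ∨ s' = s)} :
        Set T.Subgraph).Finite :=
    fun e s => S.finite_toSet.subset (fun x hx => hx.1)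
  -- the "lower endpoint height" function on edges
  obtain ⟨f, hf⟩ : ∃ f : Sym2 V → ℕ, ∀ x, x ≠ r → f s(x, parent x) = h x := by
    refine ⟨Sym2.lift ⟨fun a b => if T.dist r a < T.dist r b then h b
      else if T.dist r b < T.dist r a then h a else 0, ?_⟩, ?_⟩
    · intro a b
      dsimp only
      split_ifs <;> first | rfl | omega
    · intro x hx
      have hd := (hparent x hx).2
      rw [Sym2.lift_mk]
      dsimp only
      rw [if_neg (by omega), if_pos (by omega)]
  refine ⟨fun e s => f e +
    ({s' | s' ∈ S ∧ e ∈ SimpleGraph.Subgraph.edgeSet s' ∧ (prec s' s ∨ s' = s)} :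
      Set T.Subgraph).ncard, ?_, ?_, ?_, ?_⟩
  · -- positivity
    intro e s hs he
    dsimp only
    have hmem : s ∈ {s' | s' ∈ S ∧ e ∈ SimpleGraph.Subgraph.edgeSet s' ∧ (prec s' s ∨ s' = s)} :=
      ⟨hs, he, Or.inr rfl⟩
    have hpos := (Set.ncard_pos (hEfin e s)).mpr ⟨s, hmem⟩
    omega
  · -- (i) distinctness on a fixed edge
    intro e s hs s' hs' he he' hne
    dsimp only
    have key : ∀ a ∈ S, ∀ b ∈ S, e ∈ SimpleGraph.Subgraph.edgeSet a →
        e ∈ SimpleGraph.Subgraph.edgeSet b → prec a b →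
        ({s' | s' ∈ S ∧ e ∈ SimpleGraph.Subgraph.edgeSet s' ∧ (prec s' a ∨ s' = a)} :
          Set T.Subgraph).ncard <
        ({s' | s' ∈ S ∧ e ∈ SimpleGraph.Subgraph.edgeSet s' ∧ (prec s' b ∨ s' = b)} :
          Set T.Subgraph).ncard := by
      intro a ha b hb hea heb hab
      refine Set.ncard_lt_ncard ⟨?_, ?_⟩ (hEfin e b)
      · rintro x ⟨hx1, hx2, hx3 | rfl⟩
        · exact ⟨hx1, hx2, Or.inl (ptrans hx3 hab)⟩
        · exact ⟨hx1, hx2, Or.inl hab⟩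
      · intro hsub
        have hbmem := hsub (⟨hb, heb, Or.inr rfl⟩ :
          b ∈ {s' | s' ∈ S ∧ e ∈ SimpleGraph.Subgraph.edgeSet s' ∧ (prec s' b ∨ s' = b)})
        rcases hbmem.2.2 with hba | rfl
        · exact pasymm hab hba
        · exact pasymm hab hab
    rcases ptot hs hs' hne with hp | hp
    · have := key s hs s' hs' he he' hp
      omega
    · have := key s' hs' s hs he' he hp
      omega
  · -- (ii) monotone towards the root
    intro s hs v w hv hw hpw hew hev
    dsimp only
    have hadj := (hparent w hw).1
    have hdw := (hparent w hw).2
    rw [hpw] at hadj hdw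
    -- height increases strictly
    obtain ⟨u, hu1, hu2⟩ := (hheight w).1
    have t1 : T.dist v u ≤ T.dist v w + T.dist w u := hT.isConnected.dist_triangle
    have t2 : T.dist r u ≤ T.dist r v + T.dist v u := hT.isConnected.dist_triangle
    have hvw : T.dist v w = 1 := dist_eq_one_iff_adj.mpr hadj.symm
    have hle : h w + 1 ≤ h v := (hheight v).2 ⟨u, by omega, by omega⟩
    -- rank is monotone
    have hsub : ({s' | s' ∈ S ∧ s(w, parent w) ∈ SimpleGraph.Subgraph.edgeSet s' ∧
          (prec s' s ∨ s' = s)} : Set T.Subgraph) ⊆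
        {s' | s' ∈ S ∧ s(v, parent v) ∈ SimpleGraph.Subgraph.edgeSet s' ∧
          (prec s' s ∨ s' = s)} := by
      rintro x ⟨hx1, hx2, hx3⟩
      refine ⟨hx1, ?_, hx3⟩
      by_contra hnot
      have hxadj : x.Adj w (parent w) := SimpleGraph.Subgraph.mem_edgeSet.mp hx2
      rw [hpw] at hxadj
      have hvx : v ∈ x.verts := hxadj.snd_mem
      have hW := descend hT hparent (hSconn x hx1) hv hvx hnot (rt x) ((hrt x hx1).1)
      have hsadj : s.Adj v (parent v) := SimpleGraph.Subgraph.mem_edgeSet.mp hev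
      have hrts : T.dist r (rt s) ≤ T.dist r (parent v) := (hrt s hs).2 _ hsadj.snd_mem
      have hdv := (hparent v hv).2
      rcases hx3 with hxs | rfl
      · have hps : prec s x := (hprec s x).mpr (Or.inl (by omega))
        exact pasymm hps hxs
      · exact hnot hev
    have hcard := Set.ncard_le_ncard hsub (hEfin s(v, parent v) s)
    have hfw := hf w hw
    have hfv := hf v hv
    omega
  · -- (iii) the deadline bound
    intro s hs v hv he
    dsimp only
    rw [hf v hv]
end

section
/- Let G be a finite connected simple graph with parts P_1, …, P_N and a rooted spanning tree T, and suppose H = (H_1, …, H_N) is a T-restricted shortcut with congestion c ≥ 1 and block parameter b. Let U be a set of edges of T such that every edge e ∈ U can see, relative to U, strictly more than 2c distinct parts. Then |U| ≤ N·b/c. -/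
open SimpleGraph

/-- The edge `e` of the tree `T` (rooted at `r`, with parent function `parent`)
can see the vertex `u` relative to the edge set `U`: `u` lies in the subtree below
`e` and the `T`-path from `u` to the lower endpoint of `e` contains no edge of `U`. -/
def canSee {V : Type*} (T : SimpleGraph V) (r : V) (parent : V → V)
    (U : Set (Sym2 V)) (e : Sym2 V) (u : V) : Prop :=
  ∃ v : V, v ≠ r ∧ e = s(v, parent v) ∧
    T.dist r u = T.dist r v + T.dist v u ∧
    ∀ p : T.Walk u v, p.IsPath → ∀ e' ∈ p.edges, e' ∉ U

section TreeLemmas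

set_option linter.unusedSectionVars false

variable {V : Type*} [DecidableEq V]

private lemma tree_path_unique {T : SimpleGraph V} (hT : T.IsTree) {a b : V}
    {p q : T.Walk a b} (hp : p.IsPath) (hq : q.IsPath) : p = q := by
  have := hT.IsAcyclic.path_unique ⟨p, hp⟩ ⟨q, hq⟩
  exact congrArg Subtype.val this

private lemma tree_path_length {T : SimpleGraph V} (hT : T.IsTree) {a b : V}
    {p : T.Walk a b} (hp : p.IsPath) : p.length = T.dist a b := by
  obtain ⟨q, hq, hl⟩ := hT.isConnected.exists_path_of_dist a b
  rw [tree_path_unique hT hp hq, hl]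

private lemma dist_add_of_mem_support {T : SimpleGraph V} (hT : T.IsTree) {a b v : V}
    {p : T.Walk a b} (hp : p.IsPath) (hv : v ∈ p.support) :
    T.dist a b = T.dist a v + T.dist v b := by
  have h1 := tree_path_length hT (hp.takeUntil hv)
  have h2 := tree_path_length hT (hp.dropUntil hv)
  have h3 := tree_path_length hT hp
  have h4 := congrArg Walk.length (p.take_spec hv)
  rw [Walk.length_append] at h4
  omega

private lemma mem_support_of_dist_add {T : SimpleGraph V} (hT : T.IsTree) {a b v : V}
    (h : T.dist a b = T.dist a v + T.dist v b) {p : T.Walk a b} (hp : p.IsPath) :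
    v ∈ p.support := by
  obtain ⟨q1, hq1, hl1⟩ := hT.isConnected.exists_path_of_dist a v
  obtain ⟨q2, hq2, hl2⟩ := hT.isConnected.exists_path_of_dist v b
  have hw : (q1.append q2).length = T.dist a b := by rw [Walk.length_append]; omega
  have hwp := (q1.append q2).isPath_of_length_eq_dist hw
  rw [← tree_path_unique hT hwp hp, Walk.mem_support_append_iff]
  exact Or.inl (Walk.end_mem_support q1)

private lemma tree_comparable {T : SimpleGraph V} (hT : T.IsTree) {r u v w : V}
    (hv : T.dist r u = T.dist r v + T.dist v u)
    (hw : T.dist r u = T.dist r w + T.dist w u) :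
    T.dist r w = T.dist r v + T.dist v w ∨ T.dist r v = T.dist r w + T.dist w v := by
  obtain ⟨p, hp, _⟩ := hT.isConnected.exists_path_of_dist r u
  have hvs := mem_support_of_dist_add hT hv hp
  have hws := mem_support_of_dist_add hT hw hp
  rw [← p.take_spec hvs, Walk.mem_support_append_iff] at hws
  rcases hws with h | h
  · exact Or.inr (dist_add_of_mem_support hT (hp.takeUntil hvs) h)
  · have h5 := dist_add_of_mem_support hT (hp.dropUntil hvs) h
    have t1 := hT.isConnected.dist_triangle (u := r) (v := v) (w := w)
    have t2 := hT.isConnected.dist_triangle (u := r) (v := w) (w := u)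
    omega

private lemma tree_antisymm {T : SimpleGraph V} (hT : T.IsTree) {r v w : V}
    (h1 : T.dist r w = T.dist r v + T.dist v w)
    (h2 : T.dist r v = T.dist r w + T.dist w v) : v = w := by
  have hc : T.dist v w = T.dist w v := SimpleGraph.dist_comm
  have h0 : T.dist v w = 0 := by omega
  exact (hT.isConnected.dist_eq_zero_iff).mp h0

private lemma parent_unique {T : SimpleGraph V} (hT : T.IsTree) {r : V} {parent : V → V}
    (hparent : ∀ v, v ≠ r → T.Adj v (parent v) ∧ T.dist r (parent v) + 1 = T.dist r v)
    {v x : V} (hvr : v ≠ r) (hadj : T.Adj v x) (hd : T.dist r x + 1 = T.dist r v) :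
    x = parent v := by
  obtain ⟨hpadj, hpd⟩ := hparent v hvr
  obtain ⟨p1, hp1, _⟩ := hT.isConnected.exists_path_of_dist x r
  obtain ⟨p2, hp2, _⟩ := hT.isConnected.exists_path_of_dist (parent v) r
  have hvp1 : v ∉ p1.support := by
    intro hmem
    have h5 := dist_add_of_mem_support hT hp1 hmem
    have c1 : T.dist x r = T.dist r x := SimpleGraph.dist_comm
    have c2 : T.dist v r = T.dist r v := SimpleGraph.dist_comm
    omega
  have hvp2 : v ∉ p2.support := by
    intro hmem
    have h5 := dist_add_of_mem_support hT hp2 hmem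
    have c1 : T.dist (parent v) r = T.dist r (parent v) := SimpleGraph.dist_comm
    have c2 : T.dist v r = T.dist r v := SimpleGraph.dist_comm
    omega
  have hq1 : (Walk.cons hadj p1).IsPath := hp1.cons hvp1
  have hq2 : (Walk.cons hpadj p2).IsPath := hp2.cons hvp2
  have heq := tree_path_unique hT hq1 hq2
  have hs := congrArg Walk.support heq
  rw [Walk.support_cons, Walk.support_cons, p1.support_eq_cons, p2.support_eq_cons] at hs
  simp only [List.cons.injEq] at hs
  exact hs.2.1

private lemma below_step {T : SimpleGraph V} (hT : T.IsTree) {r : V} {parent : V → V}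
    (hparent : ∀ v, v ≠ r → T.Adj v (parent v) ∧ T.dist r (parent v) + 1 = T.dist r v)
    {v u x : V} (hvr : v ≠ r)
    (hb : T.dist r u = T.dist r v + T.dist v u) (hadj : T.Adj u x)
    (hne : s(u, x) ≠ s(v, parent v)) :
    T.dist r x = T.dist r v + T.dist v x := by
  obtain ⟨p, hp, _⟩ := hT.isConnected.exists_path_of_dist r u
  have hvp : v ∈ p.support := mem_support_of_dist_add hT hb hp
  by_cases hx : x ∈ p.support
  · have hsplit := dist_add_of_mem_support hT hp hx
    have hxu1 : T.dist x u = 1 := SimpleGraph.dist_eq_one_iff_adj.mpr hadj.symm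
    rw [← p.take_spec hx, Walk.mem_support_append_iff] at hvp
    rcases hvp with h | h
    · exact dist_add_of_mem_support hT (hp.takeUntil hx) h
    · have hd := dist_add_of_mem_support hT (hp.dropUntil hx) h
      have hcase : T.dist x v = 0 ∨ T.dist v u = 0 := by omega
      rcases hcase with h0 | h0
      · have hxv : x = v := (hT.isConnected.dist_eq_zero_iff).mp h0
        subst hxv
        have hss : T.dist x x = 0 := SimpleGraph.dist_self
        omega
      · have huv : v = u := (hT.isConnected.dist_eq_zero_iff).mp h0
        subst huv
        have hxp : x = parent v := parent_unique hT hparent hvr hadj (by omega)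
        exact absurd (by rw [hxp]) hne
  · have hq : (Walk.cons hadj.symm p.reverse).IsPath := by
      apply hp.reverse.cons
      rwa [Walk.support_reverse, List.mem_reverse]
    have hvq : v ∈ (Walk.cons hadj.symm p.reverse).support := by
      rw [Walk.support_cons]
      exact List.mem_cons_of_mem _ (by rwa [Walk.support_reverse, List.mem_reverse])
    have hd := dist_add_of_mem_support hT hq hvq
    have c1 : T.dist x r = T.dist r x := SimpleGraph.dist_comm
    have c2 : T.dist x v = T.dist v x := SimpleGraph.dist_comm
    have c3 : T.dist v r = T.dist r v := SimpleGraph.dist_comm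
    omega

private lemma below_of_walk {T : SimpleGraph V} (hT : T.IsTree) {r : V} {parent : V → V}
    (hparent : ∀ v, v ≠ r → T.Adj v (parent v) ∧ T.dist r (parent v) + 1 = T.dist r v)
    {v : V} (hvr : v ≠ r) :
    ∀ {a b : V} (p : T.Walk a b), (∀ ed ∈ p.edges, ed ≠ s(v, parent v)) →
      T.dist r a = T.dist r v + T.dist v a → T.dist r b = T.dist r v + T.dist v b := by
  intro a b p
  induction p with
  | nil => exact fun _ h => h
  | cons hadj q ih =>
      intro hed hb
      exact ih (fun ed hm => hed ed (by rw [Walk.edges_cons]; exact List.mem_cons_of_mem _ hm))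
        (below_step hT hparent hvr hb hadj
          (hed _ (by rw [Walk.edges_cons]; exact List.mem_cons_self)))

private lemma parent_edge_mem {T : SimpleGraph V} (hT : T.IsTree) {r : V} {parent : V → V}
    (hparent : ∀ v, v ≠ r → T.Adj v (parent v) ∧ T.dist r (parent v) + 1 = T.dist r v)
    {v a b : V} (hvr : v ≠ r)
    (p : T.Walk a b) (ha : T.dist r a = T.dist r v + T.dist v a)
    (hb : ¬ T.dist r b = T.dist r v + T.dist v b) :
    s(v, parent v) ∈ p.edges := by
  by_contra hmem
  exact hb (below_of_walk hT hparent hvr p (fun ed hm heq => hmem (heq ▸ hm)) ha)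

private lemma see_inj {T : SimpleGraph V} (hT : T.IsTree) {r : V} {parent : V → V}
    (hparent : ∀ v, v ≠ r → T.Adj v (parent v) ∧ T.dist r (parent v) + 1 = T.dist r v)
    {U : Set (Sym2 V)} {Hi : Set (Sym2 V)} (hHiT : Hi ⊆ T.edgeSet)
    {e e' : Sym2 V} (heU : e ∈ U) (he'U : e' ∈ U) (heH : e ∉ Hi) (he'H : e' ∉ Hi)
    {u u' : V} (hs : canSee T r parent U e u) (hs' : canSee T r parent U e' u')
    (hreach : (SimpleGraph.fromEdgeSet Hi).Reachable u u') : e = e' := by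
  obtain ⟨v, hvr, rfl, hbu, hpathu⟩ := hs
  obtain ⟨v', hv'r, rfl, hbu', hpathu'⟩ := hs'
  by_cases hvv : v = v'
  · rw [hvv]
  exfalso
  obtain ⟨W⟩ := hreach
  have hWH : ∀ ed ∈ W.edges, ed ∈ Hi := by
    intro ed hm
    have h1 := W.edges_subset_edgeSet hm
    rw [SimpleGraph.edgeSet_fromEdgeSet] at h1
    exact h1.1
  have hWT : ∀ ed ∈ W.edges, ed ∈ T.edgeSet := fun ed hm => hHiT (hWH ed hm)
  set Q := (W.transfer T hWT).bypass with hQdef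
  have hQp : Q.IsPath := Walk.bypass_isPath _
  have hQH : ∀ ed ∈ Q.edges, ed ∈ Hi := by
    intro ed hm
    have h2 := Walk.edges_bypass_subset _ hm
    rw [Walk.edges_transfer] at h2
    exact hWH ed h2
  by_cases h1 : T.dist r v' = T.dist r v + T.dist v v'
  · by_cases h2 : T.dist r u = T.dist r v' + T.dist v' u
    · obtain ⟨p0, hp0, _⟩ := hT.isConnected.exists_path_of_dist u v
      have hnb : ¬ T.dist r v = T.dist r v' + T.dist v' v := fun hcon =>
        hvv (tree_antisymm hT h1 hcon)
      have hmem := parent_edge_mem hT hparent hv'r p0 h2 hnb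
      exact hpathu p0 hp0 _ hmem he'U
    · have hmem := parent_edge_mem hT hparent hv'r Q.reverse hbu' h2
      rw [Walk.edges_reverse, List.mem_reverse] at hmem
      exact he'H (hQH _ hmem)
  · by_cases h1' : T.dist r v = T.dist r v' + T.dist v' v
    · by_cases h2 : T.dist r u' = T.dist r v + T.dist v u'
      · obtain ⟨p0, hp0, _⟩ := hT.isConnected.exists_path_of_dist u' v'
        have hmem := parent_edge_mem hT hparent hvr p0 h2 h1
        exact hpathu' p0 hp0 _ hmem heU
      · have hmem := parent_edge_mem hT hparent hvr Q hbu h2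
        exact heH (hQH _ hmem)
    · have hnb : ¬ T.dist r u' = T.dist r v + T.dist v u' := by
        intro hcon
        rcases tree_comparable hT hcon hbu' with h | h
        exacts [h1 h, h1' h]
      have hmem := parent_edge_mem hT hparent hvr Q hbu hnb
      exact heH (hQH _ hmem)

end TreeLemmas

theorem stmt8 {V : Type*} [Fintype V] (G : SimpleGraph V) (hG : G.Connected)
    (T : SimpleGraph V) (hT : T.IsTree) (hTG : T ≤ G)
    (r : V) (parent : V → V)
    (hparent : ∀ v, v ≠ r → T.Adj v (parent v) ∧ T.dist r (parent v) + 1 = T.dist r v)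
    (N : ℕ) (P : Fin N → Set V)
    (hPdisj : ∀ i j, i ≠ j → Disjoint (P i) (P j))
    (hPne : ∀ i, (P i).Nonempty)
    (hPconn : ∀ i, (G.induce (P i)).Connected)
    (c b : ℕ) (hc : 1 ≤ c)
    -- a `T`-restricted shortcut with congestion `c` and block parameter `b`
    (H : Fin N → Set (Sym2 V))
    (hTres : ∀ i, H i ⊆ T.edgeSet)
    (hcong : ∀ e ∈ G.edgeSet, {i : Fin N | e ∈ partEdges G (P i) (H i)}.ncard ≤ c)
    (hblock : ∀ i, numBlocks (P i) (H i) ≤ b)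
    -- `U` is a set of tree edges, each of which can see more than `2c` parts relative to `U`
    (U : Set (Sym2 V)) (hUT : U ⊆ T.edgeSet)
    (hU : ∀ e ∈ U, 2 * c < {i : Fin N | ∃ u ∈ P i, canSee T r parent U e u}.ncard) :
    -- then `|U| ≤ N·b/c`
    U.ncard * c ≤ N * b := by
  classical
  have hUfin : U.Finite := Set.toFinite U
  set Ufin := hUfin.toFinset with hUfdef
  set B : Sym2 V → Set (Fin N) := fun e =>
    {i | (∃ u ∈ P i, canSee T r parent U e u) ∧ e ∉ partEdges G (P i) (H i)} with hBdef
  -- each edge of `U` sees more than `c` parts whose augmented subgraph avoids it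
  have hBe : ∀ e ∈ U, c + 1 ≤ (B e).ncard := by
    intro e he
    have hS := hU e he
    have hsub : {i : Fin N | ∃ u ∈ P i, canSee T r parent U e u} ⊆
        B e ∪ {i : Fin N | e ∈ partEdges G (P i) (H i)} := by
      intro i hi
      by_cases hp : e ∈ partEdges G (P i) (H i)
      · exact Or.inr hp
      · exact Or.inl ⟨hi, hp⟩
    have hA : {i : Fin N | e ∈ partEdges G (P i) (H i)}.ncard ≤ c :=
      hcong e (SimpleGraph.edgeSet_mono hTG (hUT he))
    have hle := Set.ncard_le_ncard hsub (Set.toFinite _)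
    have hun := Set.ncard_union_le (B e) {i : Fin N | e ∈ partEdges G (P i) (H i)}
    omega
  -- each part is seen (avoidingly) by at most `b` edges of `U`
  have hPartBound : ∀ i : Fin N, (Ufin.filter (fun e => i ∈ B e)).card ≤ b := by
    intro i
    set K := SimpleGraph.fromEdgeSet (H i) with hKdef
    set Bl : Set K.ConnectedComponent :=
      {C | ∃ v ∈ P i, K.connectedComponentMk v = C} with hBldef
    have hBlfin : Bl.Finite := Set.toFinite _
    let g : Sym2 V → V := fun e =>
      if h : ∃ u, u ∈ P i ∧ canSee T r parent U e u then h.choose else (hPne i).choose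
    have hg : ∀ e ∈ Ufin.filter (fun e => i ∈ B e),
        g e ∈ P i ∧ canSee T r parent U e (g e) := by
      intro e he
      rw [Finset.mem_filter] at he
      have hBmem : i ∈ B e := he.2
      rw [hBdef] at hBmem
      obtain ⟨u, hu1, hu2⟩ := hBmem.1
      have hex : ∃ u, u ∈ P i ∧ canSee T r parent U e u := ⟨u, hu1, hu2⟩
      simp only [g, dif_pos hex]
      exact hex.choose_spec
    have hnotpart : ∀ e ∈ Ufin.filter (fun e => i ∈ B e), e ∉ H i := by
      intro e he hmem
      rw [Finset.mem_filter] at he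
      have hBmem : i ∈ B e := he.2
      rw [hBdef] at hBmem
      exact hBmem.2 (Or.inr hmem)
    have hinU : ∀ e ∈ Ufin.filter (fun e => i ∈ B e), e ∈ U := by
      intro e he
      rw [Finset.mem_filter, Set.Finite.mem_toFinset] at he
      exact he.1
    have hcard : (Ufin.filter (fun e => i ∈ B e)).card ≤ hBlfin.toFinset.card := by
      apply Finset.card_le_card_of_injOn (fun e => K.connectedComponentMk (g e))
      · intro e he
        rw [Finset.mem_coe, Set.Finite.mem_toFinset]
        exact ⟨g e, (hg e he).1, rfl⟩
      · intro e he e' he' hcc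
        have hrch : K.Reachable (g e) (g e') := (SimpleGraph.ConnectedComponent.eq).mp hcc
        exact see_inj hT hparent (hTres i) (hinU e he) (hinU e' he')
          (hnotpart e he) (hnotpart e' he') (hg e he).2 (hg e' he').2 hrch
    have hnum : hBlfin.toFinset.card = numBlocks (P i) (H i) :=
      (Set.ncard_eq_toFinset_card _ hBlfin).symm
    have := hblock i
    omega
  -- double counting
  have hcardB : ∀ e : Sym2 V, (B e).ncard = (Finset.univ.filter (fun i : Fin N => i ∈ B e)).card := by
    intro e
    rw [Set.ncard_eq_toFinset_card _ (Set.toFinite (B e))]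
    congr 1
    ext i
    simp only [Set.Finite.mem_toFinset, Finset.mem_filter, Finset.mem_univ, true_and]
  have hsum : ∑ e ∈ Ufin, (B e).ncard
      = ∑ i : Fin N, (Ufin.filter (fun e => i ∈ B e)).card := by
    simp_rw [hcardB, Finset.card_filter]
    exact Finset.sum_comm
  have hlow : Ufin.card * (c + 1) ≤ ∑ e ∈ Ufin, (B e).ncard := by
    calc Ufin.card * (c + 1) = ∑ _e ∈ Ufin, (c + 1) := by
          rw [Finset.sum_const, smul_eq_mul]
      _ ≤ ∑ e ∈ Ufin, (B e).ncard :=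
          Finset.sum_le_sum (fun e he => hBe e (hUfin.mem_toFinset.mp he))
  have hhigh : ∑ i : Fin N, (Ufin.filter (fun e => i ∈ B e)).card ≤ N * b := by
    calc ∑ i : Fin N, (Ufin.filter (fun e => i ∈ B e)).card
        ≤ ∑ _i : Fin N, b := Finset.sum_le_sum (fun i _ => hPartBound i)
      _ = N * b := by rw [Finset.sum_const, smul_eq_mul, Finset.card_univ, Fintype.card_fin]
  have hcardU : U.ncard = Ufin.card := Set.ncard_eq_toFinset_card U hUfin
  have hfinal : Ufin.card * (c + 1) ≤ N * b := le_trans hlow (hsum ▸ hhigh)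
  calc U.ncard * c ≤ Ufin.card * (c + 1) := by
        rw [hcardU]; exact Nat.mul_le_mul_left _ (by omega)
    _ ≤ N * b := hfinal
end

section
/- Let G be a finite connected simple graph with parts P_1, …, P_N and a rooted spanning tree T, and suppose H = (H_1, …, H_N) is a T-restricted shortcut with congestion c ≥ 1 and block parameter b ≥ 1. Let U be a set of edges of T such that every edge e ∈ U can see, relative to U, strictly more than 2c distinct parts. Then the number of indices i ∈ {1, …, N} for which at least 2b edges of U belong to E(G[P_i]) ∪ H_i is at most N/2. -/
open SimpleGraph

namespace Stmt9Aux

variable {V : Type*} {T : SimpleGraph V}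


variable {V : Type*} {T : SimpleGraph V}

lemma path_length_eq_dist (hT : T.IsTree) {u v : V} (p : T.Walk u v) (hp : p.IsPath) :
    p.length = T.dist u v := by
  obtain ⟨q, hq, hql⟩ := hT.isConnected.exists_path_of_dist u v
  rw [(hT.existsUnique_path u v).unique hp hq, hql]

lemma dist_getVert_le (hc : T.Connected) {a b : V} (w : T.Walk a b) :
    ∀ j k, j ≤ k → T.dist (w.getVert j) (w.getVert k) ≤ k - j := by
  induction w with
  | nil => intro j k _; simp [Walk.getVert, SimpleGraph.dist_self]
  | @cons a a1 b h p ih =>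
    intro j k hjk
    match j, k with
    | 0, 0 => simp
    | 0, (k+1) =>
      rw [Walk.getVert_zero, Walk.getVert_cons_succ]
      have h1 : T.dist a a1 ≤ 1 := by
        simpa using dist_le (Walk.cons h Walk.nil)
      have h2 := ih 0 k (Nat.zero_le _)
      rw [Walk.getVert_zero] at h2
      have h3 := hc.dist_triangle (u := a) (v := a1) (w := p.getVert k)
      omega
    | (j+1), (k+1) =>
      rw [Walk.getVert_cons_succ, Walk.getVert_cons_succ]
      have := ih j k (by omega)
      omega

lemma dist_getVert_eq (hT : T.IsTree) {a b : V} (w : T.Walk a b) (hw : w.length = T.dist a b)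
    {k : ℕ} (hk : k ≤ w.length) :
    T.dist a (w.getVert k) = k ∧ T.dist (w.getVert k) b = w.length - k := by
  have h1 := dist_getVert_le hT.isConnected w 0 k (Nat.zero_le _)
  have h2 := dist_getVert_le hT.isConnected w k w.length hk
  rw [Walk.getVert_zero] at h1
  rw [Walk.getVert_length] at h2
  have h3 := hT.isConnected.dist_triangle (u := a) (v := w.getVert k) (w := b)
  omega

lemma dist_getVert_getVert (hT : T.IsTree) {a b : V} (w : T.Walk a b)
    (hw : w.length = T.dist a b) {j k : ℕ} (hj : j ≤ k) (hk : k ≤ w.length) :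
    T.dist (w.getVert j) (w.getVert k) = k - j := by
  have h1 := dist_getVert_le hT.isConnected w j k hj
  have h2 := (dist_getVert_eq hT w hw (le_trans hj hk)).1
  have h3 := (dist_getVert_eq hT w hw hk).1
  have h4 := hT.isConnected.dist_triangle (u := a) (v := w.getVert j) (w := w.getVert k)
  omega

lemma unique_parent (hT : T.IsTree) (r : V) (parent : V → V)
    (hparent : ∀ v, v ≠ r → T.Adj v (parent v) ∧ T.dist r (parent v) + 1 = T.dist r v)
    {x y : V} (hxy : T.Adj x y) (hd : T.dist r y + 1 = T.dist r x) (hx : x ≠ r) :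
    y = parent x := by
  obtain ⟨hpadj, hpd⟩ := hparent x hx
  obtain ⟨q1, hq1l⟩ := hT.isConnected.exists_walk_length_eq_dist r y
  obtain ⟨q2, hq2l⟩ := hT.isConnected.exists_walk_length_eq_dist r (parent x)
  have hw1p : (q1.concat hxy.symm).IsPath :=
    Walk.isPath_of_length_eq_dist _ (by rw [Walk.length_concat]; omega)
  have hw2p : (q2.concat hpadj.symm).IsPath :=
    Walk.isPath_of_length_eq_dist _ (by rw [Walk.length_concat]; omega)
  have heq : q1.concat hxy.symm = q2.concat hpadj.symm :=
    (hT.existsUnique_path r x).unique hw1p hw2p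
  have hsup := congrArg Walk.support (congrArg Walk.reverse heq)
  rw [Walk.reverse_concat, Walk.reverse_concat, Walk.support_cons, Walk.support_cons] at hsup
  have h3 : q1.reverse.support = q2.reverse.support := (List.cons_eq_cons.mp hsup).2
  rw [Walk.support_eq_cons q1.reverse, Walk.support_eq_cons q2.reverse] at h3
  exact (List.cons_eq_cons.mp h3).1

lemma adj_dist_cases (hT : T.IsTree) (r : V) {x y : V} (hxy : T.Adj x y) :
    T.dist r y + 1 = T.dist r x ∨ T.dist r x + 1 = T.dist r y := by
  classical
  obtain ⟨qx, hqxp, hqxl⟩ := hT.isConnected.exists_path_of_dist r x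
  obtain ⟨qy, hqyp, hqyl⟩ := hT.isConnected.exists_path_of_dist r y
  have hxy' : T.dist r x ≤ T.dist r y + 1 := by
    have := dist_le (qy.concat hxy.symm); rw [Walk.length_concat] at this; omega
  have hyx' : T.dist r y ≤ T.dist r x + 1 := by
    have := dist_le (qx.concat hxy); rw [Walk.length_concat] at this; omega
  have hne : T.dist r x ≠ T.dist r y := by
    intro hEq
    have hxs : x ∉ qy.support := by
      intro hmem
      have h1 : T.dist r x ≤ (qy.takeUntil x hmem).length := dist_le _
      have h2 : T.dist x y ≤ (qy.dropUntil x hmem).length := dist_le _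
      have h3 : (qy.takeUntil x hmem).length + (qy.dropUntil x hmem).length = qy.length := by
        rw [← Walk.length_append, qy.take_spec hmem]
      have h4 : T.dist x y ≠ 0 := by
        intro h0
        exact hxy.ne (hT.isConnected.dist_eq_zero_iff.mp h0)
      omega
    have hconsp : (Walk.cons hxy qy.reverse).IsPath := by
      rw [Walk.cons_isPath_iff]
      refine ⟨hqyp.reverse, ?_⟩
      rw [Walk.support_reverse, List.mem_reverse]
      exact hxs
    have := (hT.existsUnique_path x r).unique hconsp hqxp.reverse
    have hlen := congrArg Walk.length this
    rw [Walk.length_cons, Walk.length_reverse, Walk.length_reverse] at hlen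
    omega
  omega

lemma below_getVert (hT : T.IsTree) {r v u : V}
    (h : T.dist r u = T.dist r v + T.dist v u)
    (w : T.Walk r u) (hw : w.length = T.dist r u) :
    v = w.getVert (T.dist r v) := by
  obtain ⟨q1, hq1l⟩ := hT.isConnected.exists_walk_length_eq_dist r v
  obtain ⟨q2, hq2l⟩ := hT.isConnected.exists_walk_length_eq_dist v u
  have hWl : (q1.append q2).length = T.dist r u := by rw [Walk.length_append]; omega
  have hWp : (q1.append q2).IsPath := Walk.isPath_of_length_eq_dist _ hWl
  have hwp : w.IsPath := Walk.isPath_of_length_eq_dist _ hw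
  have heq : w = q1.append q2 := (hT.existsUnique_path r u).unique hwp hWp
  rw [heq, Walk.getVert_append, hq1l]
  simp

lemma see_lt_false (hT : T.IsTree) (r : V) (parent : V → V)
    (hparent : ∀ v, v ≠ r → T.Adj v (parent v) ∧ T.dist r (parent v) + 1 = T.dist r v)
    (U : Set (Sym2 V)) {u v v' : V}
    (hv'r : v' ≠ r)
    (hdu : T.dist r u = T.dist r v + T.dist v u)
    (hdu' : T.dist r u = T.dist r v' + T.dist v' u)
    (hfree : ∀ p : T.Walk u v, p.IsPath → ∀ f ∈ p.edges, f ∉ U)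
    (hU' : s(v', parent v') ∈ U)
    (hlt : T.dist r v < T.dist r v') : False := by
  obtain ⟨w, hwl⟩ := hT.isConnected.exists_walk_length_eq_dist r u
  have hv : v = w.getVert (T.dist r v) := below_getVert hT hdu w hwl
  have hv' : v' = w.getVert (T.dist r v') := below_getVert hT hdu' w hwl
  have hA : T.dist r v' ≤ w.length := by rw [hwl]; omega
  have hadj : T.Adj (w.getVert (T.dist r v' - 1)) (w.getVert (T.dist r v')) := by
    have := w.adj_getVert_succ (i := T.dist r v' - 1) (by omega)
    rwa [Nat.sub_add_cancel (by omega)] at this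
  have hydist : T.dist r (w.getVert (T.dist r v' - 1)) = T.dist r v' - 1 :=
    (dist_getVert_eq hT w hwl (by omega)).1
  have hadj' : T.Adj (w.getVert (T.dist r v' - 1)) v' := by
    have h2 := hadj; rw [← hv'] at h2; exact h2
  have hyp : w.getVert (T.dist r v' - 1) = parent v' :=
    unique_parent hT r parent hparent hadj'.symm (by rw [hydist]; omega) hv'r
  have hyv : T.dist (w.getVert (T.dist r v)) (w.getVert (T.dist r v' - 1))
      = (T.dist r v' - 1) - T.dist r v :=
    dist_getVert_getVert hT w hwl (by omega) (by omega)
  have c3 : T.dist (parent v') v = (T.dist r v' - 1) - T.dist r v := by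
    conv_lhs => rw [← hyp, SimpleGraph.dist_comm, hv]
    exact hyv
  obtain ⟨p1, hp1⟩ := hT.isConnected.exists_walk_length_eq_dist u v'
  obtain ⟨p2, hp2⟩ := hT.isConnected.exists_walk_length_eq_dist (parent v') v
  have hadj2 : T.Adj v' (parent v') := (hparent v' hv'r).1
  have hWl : (p1.append (Walk.cons hadj2 p2)).length = T.dist u v := by
    rw [Walk.length_append, Walk.length_cons, hp1, hp2]
    have c1 : T.dist u v' = T.dist v' u := SimpleGraph.dist_comm
    have c2 : T.dist u v = T.dist v u := SimpleGraph.dist_comm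
    omega
  have hWp : (p1.append (Walk.cons hadj2 p2)).IsPath := Walk.isPath_of_length_eq_dist _ hWl
  have hmem : s(v', parent v') ∈ (p1.append (Walk.cons hadj2 p2)).edges := by
    rw [Walk.edges_append, Walk.edges_cons]
    simp
  exact hfree _ hWp _ hmem hU'

lemma canSee_unique (hT : T.IsTree) (r : V) (parent : V → V)
    (hparent : ∀ v, v ≠ r → T.Adj v (parent v) ∧ T.dist r (parent v) + 1 = T.dist r v)
    (U : Set (Sym2 V)) {e e' : Sym2 V} {u : V}
    (he : e ∈ U) (he' : e' ∈ U)
    (h1 : canSee T r parent U e u) (h2 : canSee T r parent U e' u) : e = e' := by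
  obtain ⟨v, hvr, rfl, hdu, hfree⟩ := h1
  obtain ⟨v2, hv2r, rfl, hdu2, hfree2⟩ := h2
  rcases lt_trichotomy (T.dist r v) (T.dist r v2) with hlt | hEq | hlt
  · exact absurd (see_lt_false hT r parent hparent U hv2r hdu hdu2 hfree he' hlt) not_false
  · obtain ⟨w, hwl⟩ := hT.isConnected.exists_walk_length_eq_dist r u
    have hv := below_getVert hT hdu w hwl
    have hv2 := below_getVert hT hdu2 w hwl
    have hvv : v = v2 := by rw [hv, hv2, hEq]
    rw [hvv]
  · exact absurd (see_lt_false hT r parent hparent U hvr hdu2 hdu hfree2 he hlt) not_false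

lemma canSee_step (hT : T.IsTree) (r : V) (parent : V → V)
    (hparent : ∀ v, v ≠ r → T.Adj v (parent v) ∧ T.dist r (parent v) + 1 = T.dist r v)
    (U : Set (Sym2 V)) {e : Sym2 V} {u u1 : V}
    (he : e ∈ U) (hsee : canSee T r parent U e u)
    (hadj : T.Adj u u1) (hedge : s(u, u1) ∉ U) :
    canSee T r parent U e u1 := by
  obtain ⟨v, hvr, rfl, hdu, hfree⟩ := hsee
  rcases adj_dist_cases hT r hadj with hup | hdown
  · -- hup : T.dist r u1 + 1 = T.dist r u  (u1 is the parent of u)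
    by_cases huv : u = v
    · subst huv
      exfalso
      have hu1 : u1 = parent u := unique_parent hT r parent hparent hadj hup hvr
      rw [← hu1] at he
      exact hedge he
    · have hur : u ≠ r := by
        intro h
        rw [h, SimpleGraph.dist_self] at hdu
        have hrv : T.dist r v ≠ 0 := fun h' => hvr ((hT.isConnected.dist_eq_zero_iff.mp h').symm)
        omega
      have hdvu : T.dist v u ≠ 0 := fun h' => huv ((hT.isConnected.dist_eq_zero_iff.mp h').symm)
      obtain ⟨q, hqp, hql⟩ := hT.isConnected.exists_path_of_dist u v
      obtain ⟨x, hux, q', hq'⟩ := Walk.exists_eq_cons_of_ne huv q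
      have hq'p : q'.IsPath := by
        rw [hq'] at hqp; exact ((Walk.cons_isPath_iff _ _).mp hqp).1
      have hq'l : q'.length = T.dist x v := path_length_eq_dist hT q' hq'p
      have hq'l2 : q'.length + 1 = T.dist u v := by
        rw [hq', Walk.length_cons] at hql; omega
      have hxdep : T.dist r x + 1 = T.dist r u := by
        rcases adj_dist_cases hT r hux with h | h
        · exact h
        · exfalso
          have tr : T.dist r x ≤ T.dist r v + T.dist v x := hT.isConnected.dist_triangle
          have cvx : T.dist v x = T.dist x v := SimpleGraph.dist_comm
          have cuv : T.dist v u = T.dist u v := SimpleGraph.dist_comm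
          omega
      have hx1 : x = u1 := by
        rw [unique_parent hT r parent hparent hux hxdep hur,
            unique_parent hT r parent hparent hadj hup hur]
      subst hx1
      refine ⟨v, hvr, rfl, ?_, ?_⟩
      · have cvx : T.dist v x = T.dist x v := SimpleGraph.dist_comm
        have cuv : T.dist v u = T.dist u v := SimpleGraph.dist_comm
        omega
      · intro p hp f hf
        have hpq : p = q' := (hT.existsUnique_path x v).unique hp hq'p
        apply hfree q hqp
        rw [hq', Walk.edges_cons]
        exact List.mem_cons_of_mem _ (hpq ▸ hf)
  · -- hdown : T.dist r u + 1 = T.dist r u1 (u1 is a child of u)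
    have t1 : T.dist v u1 ≤ T.dist v u + 1 := by
      obtain ⟨q, hql⟩ := hT.isConnected.exists_walk_length_eq_dist v u
      have := dist_le (q.concat hadj)
      rw [Walk.length_concat] at this; omega
    have t2 : T.dist r u1 ≤ T.dist r v + T.dist v u1 := hT.isConnected.dist_triangle
    have key : T.dist r u1 = T.dist r v + T.dist v u1 ∧ T.dist v u1 = T.dist v u + 1 := by omega
    obtain ⟨q, hqp, hql⟩ := hT.isConnected.exists_path_of_dist u v
    have hq0 : (Walk.cons hadj.symm q).IsPath := by
      apply Walk.isPath_of_length_eq_dist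
      rw [Walk.length_cons, hql]
      have cc : T.dist u v = T.dist v u := SimpleGraph.dist_comm
      have cc2 : T.dist u1 v = T.dist v u1 := SimpleGraph.dist_comm
      omega
    refine ⟨v, hvr, rfl, key.1, ?_⟩
    intro p hp f hf
    have hpq : p = Walk.cons hadj.symm q := (hT.existsUnique_path u1 v).unique hp hq0
    rw [hpq, Walk.edges_cons] at hf
    rcases List.mem_cons.mp hf with hf1 | hf2
    · rw [hf1, Sym2.eq_swap]; exact hedge
    · exact hfree q hqp f hf2

lemma canSee_trans (hT : T.IsTree) (r : V) (parent : V → V)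
    (hparent : ∀ v, v ≠ r → T.Adj v (parent v) ∧ T.dist r (parent v) + 1 = T.dist r v)
    (U : Set (Sym2 V)) {e : Sym2 V} {u u' : V} (w : T.Walk u u')
    (he : e ∈ U) (hsee : canSee T r parent U e u) (hw : ∀ f ∈ w.edges, f ∉ U) :
    canSee T r parent U e u' := by
  revert hsee hw
  induction w with
  | nil => intro hs _; exact hs
  | cons h p ih =>
    intro hs hw
    refine ih ?_ (fun f hf => hw f ?_)
    · exact canSee_step hT r parent hparent U he hs h (hw _ (by rw [Walk.edges_cons]; exact List.mem_cons_self))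
    · rw [Walk.edges_cons]; exact List.mem_cons_of_mem _ hf

lemma first_edge {G' : SimpleGraph V} (U : Set (Sym2 V)) {a b : V} (q : G'.Walk a b)
    (hex : ∃ f ∈ q.edges, f ∈ U) :
    ∃ (x y : V) (hxy : G'.Adj x y) (q₁ : G'.Walk a x) (q₂ : G'.Walk y b),
      q = q₁.append (Walk.cons hxy q₂) ∧ (∀ f ∈ q₁.edges, f ∉ U) ∧ s(x, y) ∈ U := by
  classical
  revert hex
  induction q with
  | nil => intro hex; simp at hex
  | @cons a m b h p ih =>
    intro hex
    by_cases hhead : s(a, m) ∈ U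
    · exact ⟨a, m, h, Walk.nil, p, by simp, by simp, hhead⟩
    · have hex' : ∃ f ∈ p.edges, f ∈ U := by
        obtain ⟨f, hf, hfU⟩ := hex
        rw [Walk.edges_cons] at hf
        rcases List.mem_cons.mp hf with rfl | hf2
        · exact absurd hfU hhead
        · exact ⟨f, hf2, hfU⟩
      obtain ⟨x, y, hxy, q₁, q₂, heq, h1, h2⟩ := ih hex'
      refine ⟨x, y, hxy, Walk.cons h q₁, q₂, ?_, ?_, h2⟩
      · rw [Walk.cons_append, ← heq]
      · intro f hf
        rw [Walk.edges_cons] at hf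
        rcases List.mem_cons.mp hf with rfl | hf2
        · exact hhead
        · exact h1 f hf2

lemma sees_card_le [Fintype V] (hT : T.IsTree) (r : V) (parent : V → V)
    (hparent : ∀ v, v ≠ r → T.Adj v (parent v) ∧ T.dist r (parent v) + 1 = T.dist r v)
    (U : Set (Sym2 V)) (Pi : Set V) (Hi : Set (Sym2 V)) (hH : Hi ⊆ T.edgeSet) :
    {e | e ∈ U ∧ ∃ u ∈ Pi, canSee T r parent U e u}.ncard
      ≤ numBlocks Pi Hi + (U ∩ Hi).ncard := by
  classical
  set K := SimpleGraph.fromEdgeSet Hi with hK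
  set B := {C : K.ConnectedComponent | ∃ v ∈ Pi, K.connectedComponentMk v = C} with hB
  set F := {e | e ∈ U ∧ ∃ u ∈ Pi, canSee T r parent U e u} with hF
  haveI : Finite K.ConnectedComponent := Quot.finite _
  have key : ∀ e : Sym2 V, ∃ z : K.ConnectedComponent ⊕ Sym2 V, e ∈ F →
      ((∀ C, z = Sum.inl C → C ∈ B ∧ canSee T r parent U e C.out) ∧
       (∀ f, z = Sum.inr f → f ∈ U ∧ f ∈ Hi ∧ ∃ x y, f = s(x, y) ∧
          canSee T r parent U e x ∧
          K.connectedComponentMk y = K.connectedComponentMk x ∧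
          K.connectedComponentMk x ∈ B ∧
          T.dist x (K.connectedComponentMk x).out
            = T.dist y (K.connectedComponentMk x).out + 1)) := by
    intro e
    by_cases he : e ∈ F
    swap
    · exact ⟨Sum.inr e, fun h => absurd h he⟩
    obtain ⟨heU, u, hu, hsee⟩ := he
    set C := K.connectedComponentMk u with hC
    have hCB : C ∈ B := ⟨u, hu, rfl⟩
    have houtC : K.connectedComponentMk C.out = C := Quot.out_eq C
    have hreach : K.Reachable u C.out := by
      rw [← ConnectedComponent.eq, houtC, hC]
    obtain ⟨w0⟩ := hreach
    have hw0T : ∀ f ∈ w0.edges, f ∈ T.edgeSet := by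
      intro f hf
      have h1 : f ∈ K.edgeSet := w0.edges_subset_edgeSet hf
      rw [hK, SimpleGraph.edgeSet_fromEdgeSet] at h1
      exact hH h1.1
    set q0 : T.Walk u C.out := (w0.transfer T hw0T).bypass with hq0
    have hq0p : q0.IsPath := Walk.bypass_isPath _
    have hq0H : ∀ f ∈ q0.edges, f ∈ Hi := by
      intro f hf
      have h1 : f ∈ (w0.transfer T hw0T).edges := Walk.edges_bypass_subset _ hf
      rw [Walk.edges_transfer] at h1
      have h2 : f ∈ K.edgeSet := w0.edges_subset_edgeSet h1
      rw [hK, SimpleGraph.edgeSet_fromEdgeSet] at h2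
      exact h2.1
    by_cases hcase : ∃ f ∈ q0.edges, f ∈ U
    · obtain ⟨x, y, hxy, q₁, q₂, heq, h1, h2⟩ := first_edge U q0 hcase
      have hfq0 : s(x, y) ∈ q0.edges := by
        rw [heq, Walk.edges_append, Walk.edges_cons]
        simp
      have hfH : s(x, y) ∈ Hi := hq0H _ hfq0
      have hq₁K : ∀ f ∈ q₁.edges, f ∈ K.edgeSet := by
        intro f hf
        have hfq : f ∈ q0.edges := by
          rw [heq, Walk.edges_append]
          exact List.mem_append_left _ hf
        rw [hK, SimpleGraph.edgeSet_fromEdgeSet]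
        exact ⟨hq0H _ hfq, T.not_isDiag_of_mem_edgeSet (q0.edges_subset_edgeSet hfq)⟩
      have hmkxu : K.connectedComponentMk x = C := by
        rw [hC]
        exact (ConnectedComponent.eq.mpr ⟨(q₁.transfer K hq₁K).reverse⟩)
      have hmkyx : K.connectedComponentMk y = K.connectedComponentMk x := by
        apply ConnectedComponent.eq.mpr
        refine Adj.reachable ?_
        rw [hK, SimpleGraph.fromEdgeSet_adj]
        exact ⟨by rw [Sym2.eq_swap]; exact hfH, hxy.ne.symm⟩
      have hc2p : (Walk.cons hxy q₂).IsPath := by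
        rw [heq] at hq0p
        exact hq0p.of_append_right
      have hq₂p : q₂.IsPath := ((Walk.cons_isPath_iff _ _).mp hc2p).1
      have hlen1 : T.dist x C.out = q₂.length + 1 := by
        have := path_length_eq_dist hT _ hc2p
        rw [Walk.length_cons] at this
        omega
      have hlen2 : T.dist y C.out = q₂.length := by
        have := path_length_eq_dist hT q₂ hq₂p
        omega
      refine ⟨Sum.inr s(x, y), fun _ => ⟨fun C' hC' => by simp at hC', fun f hf => ?_⟩⟩
      have hfeq : f = s(x, y) := (Sum.inr_injective hf).symm
      subst hfeq
      refine ⟨h2, hfH, x, y, rfl, ?_, hmkyx, ?_, ?_⟩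
      · exact canSee_trans hT r parent hparent U q₁ heU hsee h1
      · rw [hmkxu]; exact hCB
      · rw [hmkxu]; omega
    · push_neg at hcase
      refine ⟨Sum.inl C, fun _ => ⟨fun C' hC' => ?_, fun f hf => by simp at hf⟩⟩
      have hCeq : C' = C := (Sum.inl_injective hC').symm
      subst hCeq
      exact ⟨hCB, canSee_trans hT r parent hparent U q0 heU hsee hcase⟩
  choose Φ hΦ using key
  have hmaps : ∀ e ∈ F, Φ e ∈ (Sum.inl '' B ∪ Sum.inr '' (U ∩ Hi) :
      Set (K.ConnectedComponent ⊕ Sym2 V)) := by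
    intro e he
    obtain ⟨hl, hr⟩ := hΦ e he
    cases hz : Φ e with
    | inl C => exact Set.mem_union_left _ ⟨C, (hl C hz).1, rfl⟩
    | inr f =>
      obtain ⟨hfU, hfH, -⟩ := hr f hz
      exact Set.mem_union_right _ ⟨f, ⟨hfU, hfH⟩, rfl⟩
  have hinj : Set.InjOn Φ F := by
    intro e he e' he' heq'
    obtain ⟨hl, hr⟩ := hΦ e he
    obtain ⟨hl', hr'⟩ := hΦ e' he'
    cases hz : Φ e with
    | inl C =>
      obtain ⟨-, hseeC⟩ := hl C hz
      obtain ⟨-, hseeC'⟩ := hl' C (by rw [← heq']; exact hz)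
      exact canSee_unique hT r parent hparent U he.1 he'.1 hseeC hseeC'
    | inr f =>
      obtain ⟨-, -, x, y, hfxy, hseex, hmkyx, hmkB, hdist⟩ := hr f hz
      obtain ⟨-, -, x', y', hfxy', hseex', hmkyx', hmkB', hdist'⟩ :=
        hr' f (by rw [← heq']; exact hz)
      rw [hfxy] at hfxy'
      rcases Sym2.eq_iff.mp hfxy' with ⟨hx, hy⟩ | ⟨hx, hy⟩
      · subst hx; subst hy
        exact canSee_unique hT r parent hparent U he.1 he'.1 hseex hseex'
      · exfalso
        subst hx; subst hy
        rw [hmkyx] at hdist'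
        omega
  calc F.ncard ≤ (Sum.inl '' B ∪ Sum.inr '' (U ∩ Hi) :
          Set (K.ConnectedComponent ⊕ Sym2 V)).ncard :=
        Set.ncard_le_ncard_of_injOn Φ hmaps hinj (Set.toFinite _)
    _ ≤ (Sum.inl '' B).ncard + (Sum.inr '' (U ∩ Hi)).ncard := Set.ncard_union_le _ _
    _ = B.ncard + (U ∩ Hi).ncard := by
        rw [Set.ncard_image_of_injective _ Sum.inl_injective,
           Set.ncard_image_of_injective _ Sum.inr_injective]
    _ = numBlocks Pi Hi + (U ∩ Hi).ncard := rfl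

end Stmt9Aux

theorem stmt9 {V : Type*} [Fintype V] (G : SimpleGraph V) (hG : G.Connected)
    (T : SimpleGraph V) (hT : T.IsTree) (hTG : T ≤ G)
    (r : V) (parent : V → V)
    (hparent : ∀ v, v ≠ r → T.Adj v (parent v) ∧ T.dist r (parent v) + 1 = T.dist r v)
    (N : ℕ) (P : Fin N → Set V)
    (hPdisj : ∀ i j, i ≠ j → Disjoint (P i) (P j))
    (hPne : ∀ i, (P i).Nonempty)
    (hPconn : ∀ i, (G.induce (P i)).Connected)
    (c b : ℕ) (hc : 1 ≤ c) (hb : 1 ≤ b)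
    -- a `T`-restricted shortcut with congestion `c` and block parameter `b`
    (H : Fin N → Set (Sym2 V))
    (hTres : ∀ i, H i ⊆ T.edgeSet)
    (hcong : ∀ e ∈ G.edgeSet, {i : Fin N | e ∈ partEdges G (P i) (H i)}.ncard ≤ c)
    (hblock : ∀ i, numBlocks (P i) (H i) ≤ b)
    -- `U` is a set of tree edges, each of which can see more than `2c` parts relative to `U`
    (U : Set (Sym2 V)) (hUT : U ⊆ T.edgeSet)
    (hU : ∀ e ∈ U, 2 * c < {i : Fin N | ∃ u ∈ P i, canSee T r parent U e u}.ncard) :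
    -- then the number of parts that miss at least `2b` edges of `U` is at most `N/2`
    2 * {i : Fin N | 2 * b ≤ (U ∩ partEdges G (P i) (H i)).ncard}.ncard ≤ N := by
  classical
  have hfinU : U.Finite := Set.toFinite U
  set Uf : Finset (Sym2 V) := hfinU.toFinset with hUf
  have hmemUf : ∀ e, e ∈ Uf ↔ e ∈ U := fun e => Set.Finite.mem_toFinset _
  -- two specialized swap identities (double counting)
  have hswap1 : ∑ e ∈ Uf, (Finset.univ.filter
        (fun i : Fin N => ∃ u ∈ P i, canSee T r parent U e u)).card
      = ∑ i : Fin N, (Uf.filter (fun e => ∃ u ∈ P i, canSee T r parent U e u)).card := by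
    simp only [Finset.card_filter]
    exact Finset.sum_comm
  have hswap2 : ∑ e ∈ Uf, (Finset.univ.filter
        (fun i : Fin N => e ∈ partEdges G (P i) (H i))).card
      = ∑ i : Fin N, (Uf.filter (fun e => e ∈ partEdges G (P i) (H i))).card := by
    simp only [Finset.card_filter]
    exact Finset.sum_comm
  -- Lower bound: each edge of U sees more than 2c parts
  have hS1 : (2 * c + 1) * Uf.card ≤
      ∑ e ∈ Uf, (Finset.univ.filter
        (fun i : Fin N => ∃ u ∈ P i, canSee T r parent U e u)).card := by
    calc (2 * c + 1) * Uf.card = ∑ _e ∈ Uf, (2 * c + 1) := by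
          rw [Finset.sum_const, smul_eq_mul, mul_comm]
      _ ≤ _ := by
          apply Finset.sum_le_sum
          intro e he
          have h1 := hU e ((hmemUf e).mp he)
          have h2 : {i : Fin N | ∃ u ∈ P i, canSee T r parent U e u}.ncard
              = (Finset.univ.filter
                  (fun i : Fin N => ∃ u ∈ P i, canSee T r parent U e u)).card := by
            rw [← Set.ncard_coe_finset]
            congr 1
            ext i
            simp
          omega
  -- Upper bound per part from the injection lemma
  have hhard : ∀ i, (Uf.filter (fun e => ∃ u ∈ P i, canSee T r parent U e u)).card
      ≤ b + (Uf.filter (fun e => e ∈ partEdges G (P i) (H i))).card := by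
    intro i
    have h1 := Stmt9Aux.sees_card_le hT r parent hparent U (P i) (H i) (hTres i)
    have h2 : {e | e ∈ U ∧ ∃ u ∈ P i, canSee T r parent U e u}.ncard
        = (Uf.filter (fun e => ∃ u ∈ P i, canSee T r parent U e u)).card := by
      rw [← Set.ncard_coe_finset]
      congr 1
      ext e
      simp [hmemUf]
    have h4 : (U ∩ H i).ncard ≤ (U ∩ partEdges G (P i) (H i)).ncard :=
      Set.ncard_le_ncard (Set.inter_subset_inter (le_refl U) Set.subset_union_right)
        (Set.toFinite _)
    have h5 : (U ∩ partEdges G (P i) (H i)).ncard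
        = (Uf.filter (fun e => e ∈ partEdges G (P i) (H i))).card := by
      rw [← Set.ncard_coe_finset]
      congr 1
      ext e
      simp [hmemUf]
    have h6 := hblock i
    omega
  -- Congestion bound
  have hS2 : ∑ i : Fin N, (Uf.filter (fun e => e ∈ partEdges G (P i) (H i))).card
      ≤ c * Uf.card := by
    rw [← hswap2]
    calc ∑ e ∈ Uf, (Finset.univ.filter
          (fun i : Fin N => e ∈ partEdges G (P i) (H i))).card
        ≤ ∑ _e ∈ Uf, c := by
          apply Finset.sum_le_sum
          intro e he
          have heG : e ∈ G.edgeSet := edgeSet_mono hTG (hUT ((hmemUf e).mp he))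
          have h1 := hcong e heG
          have h2 : {i : Fin N | e ∈ partEdges G (P i) (H i)}.ncard
              = (Finset.univ.filter (fun i : Fin N => e ∈ partEdges G (P i) (H i))).card := by
            rw [← Set.ncard_coe_finset]
            congr 1
            ext i
            simp
          omega
      _ = c * Uf.card := by rw [Finset.sum_const, smul_eq_mul, mul_comm]
  -- Combine: (c+1) * |U| ≤ N * b
  have hcomb : (c + 1) * Uf.card ≤ N * b := by
    have e1 : (2 * c + 1) * Uf.card
        ≤ ∑ i : Fin N, (Uf.filter (fun e => ∃ u ∈ P i, canSee T r parent U e u)).card :=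
      le_trans hS1 (le_of_eq hswap1)
    have e2 : ∑ i : Fin N, (Uf.filter (fun e => ∃ u ∈ P i, canSee T r parent U e u)).card
        ≤ ∑ i : Fin N, (b + (Uf.filter (fun e => e ∈ partEdges G (P i) (H i))).card) :=
      Finset.sum_le_sum (fun i _ => hhard i)
    rw [Finset.sum_add_distrib, Finset.sum_const, Finset.card_univ, Fintype.card_fin,
      smul_eq_mul] at e2
    have e3 : (2 * c + 1) * Uf.card = (c + 1) * Uf.card + c * Uf.card := by ring
    linarith [hS2]
  -- The heavy parts
  have hMb : 2 * b * {i : Fin N | 2 * b ≤ (U ∩ partEdges G (P i) (H i)).ncard}.ncard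
      ≤ c * Uf.card := by
    have hgen : ∀ M : Finset (Fin N),
        (∀ i ∈ M, 2 * b ≤ (U ∩ partEdges G (P i) (H i)).ncard) →
        2 * b * M.card ≤ c * Uf.card := by
      intro M hM
      have step : ∀ i ∈ M,
          2 * b ≤ (Uf.filter (fun e => e ∈ partEdges G (P i) (H i))).card := by
        intro i hi
        have h1 := hM i hi
        have h2 : (U ∩ partEdges G (P i) (H i)).ncard
            = (Uf.filter (fun e => e ∈ partEdges G (P i) (H i))).card := by
          rw [← Set.ncard_coe_finset]
          congr 1
          ext e
          simp [hmemUf]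
        omega
      calc 2 * b * M.card = ∑ _i ∈ M, 2 * b := by
            rw [Finset.sum_const, smul_eq_mul, mul_comm]
        _ ≤ ∑ i ∈ M, (Uf.filter (fun e => e ∈ partEdges G (P i) (H i))).card :=
            Finset.sum_le_sum step
        _ ≤ ∑ i : Fin N, (Uf.filter (fun e => e ∈ partEdges G (P i) (H i))).card :=
            Finset.sum_le_sum_of_subset (Finset.subset_univ M)
        _ ≤ c * Uf.card := hS2
    have hset : {i : Fin N | 2 * b ≤ (U ∩ partEdges G (P i) (H i)).ncard}.ncard
        = (Finset.univ.filter
            (fun i : Fin N => 2 * b ≤ (U ∩ partEdges G (P i) (H i)).ncard)).card := by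
      rw [← Set.ncard_coe_finset]
      congr 1
      ext i
      simp
    rw [hset]
    apply hgen
    intro i hi
    exact (Finset.mem_filter.mp hi).2
  set m := {i : Fin N | 2 * b ≤ (U ∩ partEdges G (P i) (H i)).ncard}.ncard with hm
  have key2 : (2 * m) * (b * (c + 1)) ≤ N * (b * (c + 1)) := by
    calc (2 * m) * (b * (c + 1)) = (2 * b * m) * (c + 1) := by ring
      _ ≤ (c * Uf.card) * (c + 1) := mul_le_mul_left hMb _
      _ = c * ((c + 1) * Uf.card) := by ring
      _ ≤ c * (N * b) := mul_le_mul_right hcomb _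
      _ ≤ (c + 1) * (N * b) := mul_le_mul_left (Nat.le_succ c) _
      _ = N * (b * (c + 1)) := by ring
  have hpos : 0 < b * (c + 1) := by positivity
  exact Nat.le_of_mul_le_mul_right key2 hpos
end
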